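/- For all h ≥ 2, the minimum number of pebbles required in a whole black-white pebbling (without white sliding moves) of the complete binary tree of height h is exactly ⌈h/2⌉ + 1. -/

import Mathlib

/-! ## Fractional black-white pebbling -/

/-- A fractional pebble configuration: black and white pebble values on each node. -/
structure FConfig (V : Type) where
  b : V → ℝ
  w : V → ℝ

namespace FConfig

/-- Validity: all values nonnegative, total value of each node at most 1. -/
def Valid {V : Type} (C : FConfig V) : Prop :=
  ∀ v, 0 ≤ C.b v ∧ 0 ≤ C.w v ∧ C.b v + C.w v ≤ 1

/-- Total pebble weight of a configuration. -/
noncomputable def weight {V : Type} [Fintype V] (C : FConfig V) : ℝ :=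
  ∑ v, (C.b v + C.w v)

/-- The empty configuration. -/
def zero (V : Type) : FConfig V := ⟨fun _ => 0, fun _ => 0⟩

/-- A whole (non-fractional) configuration: all values 0 or 1. -/
def Whole {V : Type} (C : FConfig V) : Prop :=
  ∀ v, (C.b v = 0 ∨ C.b v = 1) ∧ (C.w v = 0 ∨ C.w v = 1)

/-- A black configuration: whole, and with no white pebbles. -/
def BlackOnly {V : Type} (C : FConfig V) : Prop :=
  C.Whole ∧ ∀ v, C.w v = 0

end FConfig

/-- One legal move of the fractional black-white pebble game (no white sliding):
(i) decrease a black value; (ii) increase a white value; (iii) if every child of `v`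
has total pebble value 1, decrease `w v` to 0 and/or increase `b v` arbitrarily while
simultaneously decreasing the black values of the children of `v` arbitrarily.
Here `child c v` means `c` is a child of `v`. -/
def FMove {V : Type} (child : V → V → Prop) (C C' : FConfig V) : Prop :=
  (∃ v, C'.b v ≤ C.b v ∧ C'.w v = C.w v ∧
     ∀ u, u ≠ v → C'.b u = C.b u ∧ C'.w u = C.w u) ∨
  (∃ v, C'.b v = C.b v ∧ C.w v ≤ C'.w v ∧
     ∀ u, u ≠ v → C'.b u = C.b u ∧ C'.w u = C.w u) ∨
  (∃ v, (∀ c, child c v → C.b c + C.w c = 1) ∧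
     C.b v ≤ C'.b v ∧ (C'.w v = 0 ∨ C'.w v = C.w v) ∧
     (∀ c, child c v → C'.b c ≤ C.b c ∧ C'.w c = C.w c) ∧
     (∀ u, u ≠ v → ¬ child u v → C'.b u = C.b u ∧ C'.w u = C.w u))

/-- The additional white sliding move: if `w v = 1`, `j` is a child of `v`, and every
child of `v` other than `j` has total pebble value 1, then set `w v = 0` and increase
`w j` so that `j` gets total pebble value 1. -/
def WhiteSlide {V : Type} (child : V → V → Prop) (C C' : FConfig V) : Prop :=
  ∃ v j, child j v ∧ j ≠ v ∧ C.w v = 1 ∧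
    (∀ c, child c v → c ≠ j → C.b c + C.w c = 1) ∧
    C'.w v = 0 ∧ C'.b v = C.b v ∧
    C'.b j = C.b j ∧ C.w j ≤ C'.w j ∧ C'.b j + C'.w j = 1 ∧
    (∀ u, u ≠ v → u ≠ j → C'.b u = C.b u ∧ C'.w u = C.w u)

/-- A pebbling of cost at most `p`, with moves given by `move`, all configurations
satisfying the extra constraint `Extra`, starting and ending with the empty
configuration and achieving `Goal` (a property of the whole sequence together with
its length). -/
def PebblingLE {V : Type} [Fintype V] (move : FConfig V → FConfig V → Prop)
    (Extra : FConfig V → Prop) (Goal : (ℕ → FConfig V) → ℕ → Prop) (p : ℝ) : Prop :=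
  ∃ (n : ℕ) (C : ℕ → FConfig V),
    C 0 = FConfig.zero V ∧ C n = FConfig.zero V ∧
    (∀ t ≤ n, (C t).Valid) ∧
    (∀ t ≤ n, Extra (C t)) ∧
    (∀ t < n, move (C t) (C (t + 1))) ∧
    Goal C n ∧
    (∀ t ≤ n, (C t).weight ≤ p)

/-! ## The complete `d`-ary tree of height `h` (with `h` levels) -/

/-- Nodes of the complete `d`-ary tree with `h` levels: a level `l < h`
together with an index among the `d ^ l` nodes of that level. -/
abbrev TNode (d h : ℕ) := Σ l : Fin h, Fin (d ^ (l : ℕ))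

/-- `c` is a child of `v` in the complete `d`-ary tree. -/
def IsChild (d h : ℕ) (c v : TNode d h) : Prop :=
  (c.1 : ℕ) = (v.1 : ℕ) + 1 ∧ ∃ j : Fin d, (c.2 : ℕ) = d * (v.2 : ℕ) + (j : ℕ)

/-- The root of the tree. -/
def troot (d h : ℕ) (hh : 0 < h) : TNode d h :=
  ⟨⟨0, hh⟩, ⟨0, by simp⟩⟩

/-- The tree `T_d^h` has a black pebbling of cost at most `p`. -/
def BlackPebbles (d h : ℕ) (hh : 0 < h) (p : ℝ) : Prop :=
  PebblingLE (FMove (IsChild d h)) FConfig.BlackOnly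
    (fun C n => ∃ t ≤ n, (C t).b (troot d h hh) = 1) p

/-- The tree `T_d^h` has a whole black-white pebbling (no white sliding)
of cost at most `p`. -/
def BWPebbles (d h : ℕ) (hh : 0 < h) (p : ℝ) : Prop :=
  PebblingLE (FMove (IsChild d h)) FConfig.Whole
    (fun C n => ∃ t ≤ n, (C t).b (troot d h hh) = 1) p

/-- The tree `T_d^h` has a fractional pebbling of cost at most `p`. -/
def FRPebbles (d h : ℕ) (hh : 0 < h) (p : ℝ) : Prop :=
  PebblingLE (FMove (IsChild d h)) (fun _ => True)
    (fun C n => ∃ t ≤ n, (C t).b (troot d h hh) = 1) p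

/-- Fractional pebbling of `T_d^h` where white sliding moves are also permitted. -/
def FRPebblesWS (d h : ℕ) (hh : 0 < h) (p : ℝ) : Prop :=
  PebblingLE (fun C C' => FMove (IsChild d h) C C' ∨ WhiteSlide (IsChild d h) C C')
    (fun _ => True)
    (fun C n => ∃ t ≤ n, (C t).b (troot d h hh) = 1) p


namespace BWProof

abbrev Vt (h : ℕ) := TNode 2 h

variable {h : ℕ}

def lvl (v : Vt h) : ℕ := v.1
def idx (v : Vt h) : ℕ := v.2

lemma lvl_lt (v : Vt h) : lvl v < h := v.1.isLt
lemma idx_lt (v : Vt h) : idx v < 2 ^ lvl v := v.2.isLt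

lemma node_ext {v u : Vt h} (h1 : lvl v = lvl u) (h2 : idx v = idx u) : v = u := by
  rcases v with ⟨⟨l1, hl1⟩, ⟨i1, hi1⟩⟩
  rcases u with ⟨⟨l2, hl2⟩, ⟨i2, hi2⟩⟩
  simp only [lvl, idx] at h1 h2
  subst h1; subst h2; rfl

/-- `u` lies in the subtree rooted at `v`. -/
def InSub (v u : Vt h) : Prop :=
  lvl v ≤ lvl u ∧ idx u / 2 ^ (lvl u - lvl v) = idx v

instance (v u : Vt h) : Decidable (InSub v u) := by unfold InSub; infer_instance

lemma insub_refl (v : Vt h) : InSub v v := by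
  refine ⟨le_rfl, ?_⟩; simp

lemma insub_lvl {v u : Vt h} (hs : InSub v u) : lvl v ≤ lvl u := hs.1

lemma eq_of_insub_lvl {v u : Vt h} (hs : InSub v u) (hl : lvl u ≤ lvl v) : v = u := by
  have h1 : lvl v = lvl u := le_antisymm hs.1 hl
  refine node_ext h1 ?_
  have := hs.2
  rw [h1] at this
  simpa using this.symm

lemma child_lvl {c v : Vt h} (hc : IsChild 2 h c v) : lvl c = lvl v + 1 := hc.1

lemma child_idx {c v : Vt h} (hc : IsChild 2 h c v) :
    idx c = 2 * idx v ∨ idx c = 2 * idx v + 1 := by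
  obtain ⟨j, hj⟩ := hc.2
  have : (j : ℕ) = 0 ∨ (j : ℕ) = 1 := by omega
  rcases this with hj0 | hj0 <;> [left; right] <;> simp [idx, hj, hj0]

lemma insub_child {c v u : Vt h} (hs : InSub v u) (hc : IsChild 2 h c u) : InSub v c := by
  obtain ⟨hl, hi⟩ := hs
  have hcl : lvl c = lvl u + 1 := child_lvl hc
  rcases child_idx hc with hci | hci
  · refine ⟨by omega, ?_⟩
    rw [hcl, hci]
    have h2 : lvl u + 1 - lvl v = (lvl u - lvl v) + 1 := by omega
    rw [h2, pow_succ, Nat.mul_comm (2 ^ (lvl u - lvl v)) 2, ← Nat.div_div_eq_div_mul]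
    simpa using hi
  · refine ⟨by omega, ?_⟩
    rw [hcl, hci]
    have h2 : lvl u + 1 - lvl v = (lvl u - lvl v) + 1 := by omega
    rw [h2, pow_succ, Nat.mul_comm (2 ^ (lvl u - lvl v)) 2, ← Nat.div_div_eq_div_mul]
    have : (2 * idx u + 1) / 2 = idx u := by omega
    rw [this]; exact hi

lemma insub_of_child {c v : Vt h} (hc : IsChild 2 h c v) : InSub v c :=
  insub_child (insub_refl v) hc

lemma insub_trans {v u w : Vt h} (h1 : InSub v u) (h2 : InSub u w) : InSub v w := by
  obtain ⟨hl1, hi1⟩ := h1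
  obtain ⟨hl2, hi2⟩ := h2
  refine ⟨le_trans hl1 hl2, ?_⟩
  have hsplit : lvl w - lvl v = (lvl w - lvl u) + (lvl u - lvl v) := by omega
  rw [hsplit, pow_add, ← Nat.div_div_eq_div_mul, hi2, hi1]

lemma insub_sibling {x y u : Vt h} (h1 : InSub x u) (h2 : InSub y u)
    (hl : lvl x = lvl y) : x = y := by
  refine node_ext hl ?_
  have := h1.2
  rw [hl] at this
  rw [← this, ← h2.2]

/-- the `j`-th child of `v` -/
def nchild (v : Vt h) (j : Fin 2) (hlt : lvl v + 1 < h) : Vt h :=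
  ⟨⟨lvl v + 1, hlt⟩, ⟨2 * idx v + j, by
    have := idx_lt v
    have hj : (j : ℕ) < 2 := j.isLt
    calc 2 * idx v + (j : ℕ) < 2 * (idx v + 1) := by omega
    _ ≤ 2 * 2 ^ lvl v := by omega
    _ = 2 ^ (lvl v + 1) := by rw [pow_succ, Nat.mul_comm]⟩⟩

lemma nchild_lvl (v : Vt h) (j : Fin 2) (hlt : lvl v + 1 < h) :
    lvl (nchild v j hlt) = lvl v + 1 := rfl

lemma nchild_idx (v : Vt h) (j : Fin 2) (hlt : lvl v + 1 < h) :
    idx (nchild v j hlt) = 2 * idx v + j := rfl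

lemma nchild_isChild (v : Vt h) (j : Fin 2) (hlt : lvl v + 1 < h) :
    IsChild 2 h (nchild v j hlt) v := ⟨rfl, ⟨j, rfl⟩⟩

lemma nchild_ne (v : Vt h) (hlt : lvl v + 1 < h) :
    nchild v 0 hlt ≠ nchild v 1 hlt := by
  intro hEq
  have := congrArg idx hEq
  rw [nchild_idx, nchild_idx] at this
  simp at this

lemma child_eq_nchild {c v : Vt h} (hc : IsChild 2 h c v) (hlt : lvl v + 1 < h) :
    c = nchild v 0 hlt ∨ c = nchild v 1 hlt := by
  rcases child_idx hc with hci | hci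
  · left; exact node_ext (by rw [child_lvl hc]; rfl) (by rw [hci]; simp [nchild_idx])
  · right; exact node_ext (by rw [child_lvl hc]; rfl) (by rw [hci]; simp [nchild_idx])

lemma child_lvl_lt {c v : Vt h} (hc : IsChild 2 h c v) : lvl v + 1 < h := by
  have := lvl_lt c
  have := child_lvl hc
  omega

lemma not_child_self {c v : Vt h} (hc : IsChild 2 h c v) : c ≠ v := by
  intro hEq
  have := child_lvl hc
  rw [hEq] at this
  omega

lemma child_ne_parent {c v : Vt h} (hc : IsChild 2 h c v) : v ≠ c :=
  fun hEq => not_child_self hc hEq.symm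

lemma leaf_no_child {c v : Vt h} (hv : h ≤ lvl v + 1) : ¬ IsChild 2 h c v := by
  intro hc
  have := lvl_lt c
  have := child_lvl hc
  omega

/-- strict subtree of `v` as a Finset -/
noncomputable def subo (v : Vt h) : Finset (Vt h) :=
  Finset.univ.filter (fun u => InSub v u ∧ u ≠ v)

lemma mem_subo {v u : Vt h} : u ∈ subo v ↔ InSub v u ∧ u ≠ v := by
  simp [subo]

lemma child_mem_subo {c v : Vt h} (hc : IsChild 2 h c v) : c ∈ subo v :=
  mem_subo.2 ⟨insub_of_child hc, not_child_self hc⟩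

lemma subo_subset_of_insub {v u : Vt h} (hs : InSub v u) (hne : u ≠ v) :
    subo u ⊆ subo v := by
  intro w hw
  rw [mem_subo] at hw ⊢
  refine ⟨insub_trans hs hw.1, ?_⟩
  intro hEq
  have h1 : lvl v ≤ lvl u := insub_lvl hs
  have h2 : lvl u ≤ lvl w := insub_lvl hw.1
  rw [hEq] at h2
  exact hne (eq_of_insub_lvl hs h2).symm

lemma subo_child_subset {c v : Vt h} (hc : IsChild 2 h c v) : subo c ⊆ subo v :=
  subo_subset_of_insub (insub_of_child hc) (not_child_self hc)

lemma mem_subo_of_insub_child {c v u : Vt h} (hc : IsChild 2 h c v) (hs : InSub c u) :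
    u ∈ subo v := by
  rw [mem_subo]
  refine ⟨insub_trans (insub_of_child hc) hs, ?_⟩
  intro hEq
  have h1 := insub_lvl hs
  have h2 := child_lvl hc
  rw [hEq] at h1
  omega

/-- disjointness of sibling subtrees: if `u` is in both subtrees then siblings equal -/
lemma sibling_disjoint {x y u : Vt h} (hx : InSub x u) (hy : InSub y u)
    (hl : lvl x = lvl y) (hne : x ≠ y) : False :=
  hne (insub_sibling hx hy hl)

end BWProof

namespace BWProof

open Finset

variable {h : ℕ}

/-- `u` carries a pebble in configuration `A`. -/
def Peb (A : FConfig (Vt h)) (u : Vt h) : Prop := A.b u + A.w u ≠ 0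

noncomputable instance (A : FConfig (Vt h)) : DecidablePred (Peb A) := by
  unfold Peb; infer_instance

noncomputable def pebCount (A : FConfig (Vt h)) (S : Finset (Vt h)) : ℕ :=
  (S.filter (fun u => Peb A u)).card

lemma peb_of_b_ne {A : FConfig (Vt h)} (hv : A.Valid) {u : Vt h}
    (hb : A.b u ≠ 0) : Peb A u := by
  have := (hv u).1; have := (hv u).2.1
  unfold Peb; intro hc
  apply hb; nlinarith [hv u]

lemma peb_of_w_ne {A : FConfig (Vt h)} (hv : A.Valid) {u : Vt h}
    (hw : A.w u ≠ 0) : Peb A u := by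
  unfold Peb; intro hc
  have h1 := (hv u).1; have h2 := (hv u).2.1
  apply hw; nlinarith

lemma peb_of_b1 {A : FConfig (Vt h)} (hv : A.Valid) {u : Vt h}
    (hb : A.b u = 1) : Peb A u := peb_of_b_ne hv (by rw [hb]; norm_num)

lemma peb_of_w1 {A : FConfig (Vt h)} (hv : A.Valid) {u : Vt h}
    (hw : A.w u = 1) : Peb A u := peb_of_w_ne hv (by rw [hw]; norm_num)

lemma b_cases {A : FConfig (Vt h)} (hw : A.Whole) (u : Vt h) :
    A.b u = 0 ∨ A.b u = 1 := (hw u).1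

lemma w_cases {A : FConfig (Vt h)} (hw : A.Whole) (u : Vt h) :
    A.w u = 0 ∨ A.w u = 1 := (hw u).2

lemma peb_b_or_w {A : FConfig (Vt h)} (hw : A.Whole) {u : Vt h}
    (hp : Peb A u) : A.b u = 1 ∨ A.w u = 1 := by
  rcases (hw u).1 with hb | hb
  · rcases (hw u).2 with hww | hww
    · exfalso; apply hp; rw [hb, hww]; ring
    · right; exact hww
  · left; exact hb

lemma pebCount_le_of_subset {A : FConfig (Vt h)} {S S' : Finset (Vt h)}
    (hs : S' ⊆ S) : pebCount A S' ≤ pebCount A S := by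
  unfold pebCount
  exact Finset.card_le_card (Finset.filter_subset_filter _ hs)

lemma two_le_pebCount {A : FConfig (Vt h)} {S : Finset (Vt h)} {x y : Vt h}
    (hx : x ∈ S) (hy : y ∈ S) (hxy : x ≠ y) (hpx : Peb A x) (hpy : Peb A y) :
    2 ≤ pebCount A S := by
  unfold pebCount
  have hsub : {x, y} ⊆ S.filter (fun u => Peb A u) := by
    intro u hu
    simp only [Finset.mem_insert, Finset.mem_singleton] at hu
    rcases hu with rfl | rfl
    · exact Finset.mem_filter.2 ⟨hx, hpx⟩
    · exact Finset.mem_filter.2 ⟨hy, hpy⟩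
  have h2 : ({x, y} : Finset (Vt h)).card = 2 := by
    rw [Finset.card_insert_of_notMem (by simpa using hxy), Finset.card_singleton]
  rw [← h2]
  exact Finset.card_le_card hsub

lemma exists_peb_of_pos {A : FConfig (Vt h)} {S : Finset (Vt h)}
    (hpos : 1 ≤ pebCount A S) : ∃ u ∈ S, Peb A u := by
  unfold pebCount at hpos
  have : (S.filter (fun u => Peb A u)).Nonempty := Finset.card_pos.1 hpos
  obtain ⟨u, hu⟩ := this
  rw [Finset.mem_filter] at hu
  exact ⟨u, hu.1, hu.2⟩

/-- if the count on `S` is at most `K` and a subset `S'` already carries `K`,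
then everything in `S` outside `S'` is empty -/
lemma empty_outside {A : FConfig (Vt h)} {S S' : Finset (Vt h)} {K : ℕ}
    (hsub : S' ⊆ S) (hle : pebCount A S ≤ K) (hge : K ≤ pebCount A S') :
    ∀ u ∈ S, u ∉ S' → ¬ Peb A u := by
  intro u huS huS' hpeb
  have hins : insert u (S'.filter (fun w => Peb A w)) ⊆ S.filter (fun w => Peb A w) := by
    intro w hw
    rcases Finset.mem_insert.1 hw with rfl | hw'
    · exact Finset.mem_filter.2 ⟨huS, hpeb⟩
    · rw [Finset.mem_filter] at hw' ⊢
      exact ⟨hsub hw'.1, hw'.2⟩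
  have hcard := Finset.card_le_card hins
  rw [Finset.card_insert_of_notMem (by
    intro hc; exact huS' (Finset.mem_filter.1 hc).1)] at hcard
  unfold pebCount at hle hge
  omega

/-- In a move, if the black value of `u` increases or the white value decreases,
then all children of `u` are fully pebbled in the pre-configuration. -/
lemma move_crit {A B : FConfig (Vt h)} (hm : FMove (IsChild 2 h) A B) (u : Vt h)
    (hchg : A.b u < B.b u ∨ B.w u < A.w u) :
    ∀ d, IsChild 2 h d u → A.b d + A.w d = 1 := by
  rcases hm with ⟨v, hb, hw, hoth⟩ | ⟨v, hb, hw, hoth⟩ | ⟨v, hpre, hbv, hwv, hchl, hoth⟩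
  · by_cases hEq : u = v
    · subst hEq; rcases hchg with hc | hc <;> [linarith; (rw [hw] at hc; linarith)]
    · obtain ⟨h1, h2⟩ := hoth u hEq
      rcases hchg with hc | hc <;> [(rw [h1] at hc; linarith); (rw [h2] at hc; linarith)]
  · by_cases hEq : u = v
    · subst hEq; rcases hchg with hc | hc <;> [(rw [hb] at hc; linarith); linarith]
    · obtain ⟨h1, h2⟩ := hoth u hEq
      rcases hchg with hc | hc <;> [(rw [h1] at hc; linarith); (rw [h2] at hc; linarith)]
  · by_cases hEq : u = v
    · subst hEq; exact hpre
    · by_cases hch : IsChild 2 h u v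
      · obtain ⟨h1, h2⟩ := hchl u hch
        rcases hchg with hc | hc <;> linarith
      · obtain ⟨h1, h2⟩ := hoth u hEq hch
        rcases hchg with hc | hc <;> [(rw [h1] at hc; linarith); (rw [h2] at hc; linarith)]

section Traces

variable (C : ℕ → FConfig (Vt h)) (n : ℕ)

/-- trace a black pebble back to its creation -/
lemma traceB
    (hmov : ∀ r < n, FMove (IsChild 2 h) (C r) (C (r+1)))
    (hwhl : ∀ r ≤ n, (C r).Whole)
    (c : Vt h) (s τ : ℕ) (hsτ : s ≤ τ) (hτn : τ ≤ n)
    (h0 : (C s).b c = 0) (h1 : (C τ).b c = 1) :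
    ∃ τc, s ≤ τc ∧ τc < τ ∧ (∀ d, IsChild 2 h d c → (C τc).b d + (C τc).w d = 1) ∧
      (∀ r, τc < r → r ≤ τ → (C r).b c = 1) := by
  classical
  set P : ℕ → Prop := fun r => s ≤ r ∧ (C r).b c = 0 with hP
  have hPs : P s := ⟨le_rfl, h0⟩
  set τc := Nat.findGreatest P τ with hτc
  have hsc : s ≤ τc := Nat.le_findGreatest hsτ hPs
  have hspec : P τc := Nat.findGreatest_spec hsτ hPs
  have hgr : ∀ r, τc < r → r ≤ τ → (C r).b c = 1 := by
    intro r hr1 hr2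
    have hnP : ¬ (s ≤ r ∧ (C r).b c = 0) :=
      Nat.findGreatest_is_greatest (P := P) hr1 hr2
    push_neg at hnP
    have hb := hnP (le_trans hsc (le_of_lt hr1))
    rcases b_cases (hwhl r (le_trans hr2 hτn)) c with hc | hc
    · exact absurd hc hb
    · exact hc
  have hlt : τc < τ := by
    rcases Nat.lt_or_ge τc τ with hl | hl
    · exact hl
    · exfalso
      have : τc ≤ τ := Nat.findGreatest_le τ
      have : τc = τ := le_antisymm this hl
      rw [this] at hspec
      rw [hspec.2] at h1; norm_num at h1
  refine ⟨τc, hsc, hlt, ?_, hgr⟩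
  have hmove := hmov τc (lt_of_lt_of_le hlt hτn)
  apply move_crit hmove
  left
  rw [hspec.2, hgr (τc+1) (Nat.lt_succ_self _) hlt]
  norm_num

/-- trace a white pebble forward to its removal -/
lemma traceW
    (hmov : ∀ r < n, FMove (IsChild 2 h) (C r) (C (r+1)))
    (hwhl : ∀ r ≤ n, (C r).Whole)
    (c : Vt h) (τ t : ℕ) (hτt : τ ≤ t) (htn : t ≤ n)
    (h1 : (C τ).w c = 1) (h0 : (C t).w c = 0) :
    ∃ τc, τ ≤ τc ∧ τc < t ∧ (∀ d, IsChild 2 h d c → (C τc).b d + (C τc).w d = 1) ∧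
      (∀ r, τ ≤ r → r ≤ τc → (C r).w c = 1) := by
  classical
  have hex : ∃ e, (C (τ + e)).w c = 0 := ⟨t - τ, by rwa [Nat.add_sub_cancel' hτt]⟩
  set e0 := Nat.find hex with he0
  have he0spec : (C (τ + e0)).w c = 0 := Nat.find_spec hex
  have he0min : ∀ e < e0, (C (τ + e)).w c ≠ 0 := fun e he => Nat.find_min hex he
  have he0le : e0 ≤ t - τ := Nat.find_min' hex (by rwa [Nat.add_sub_cancel' hτt])
  have he0pos : 0 < e0 := by
    rcases Nat.eq_zero_or_pos e0 with h' | h'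
    · exfalso; rw [h'] at he0spec; simp at he0spec; rw [he0spec] at h1; norm_num at h1
    · exact h'
  set τc := τ + e0 - 1 with hτcdef
  have hτc1 : τ + e0 = τc + 1 := by omega
  have hone : ∀ r, τ ≤ r → r ≤ τc → (C r).w c = 1 := by
    intro r hr1 hr2
    have hne : (C r).w c ≠ 0 := by
      have : r - τ < e0 := by omega
      have := he0min (r - τ) this
      rwa [Nat.add_sub_cancel' hr1] at this
    rcases w_cases (hwhl r (by omega)) c with hc | hc
    · exact absurd hc hne
    · exact hc
  have hτcn : τc < t := by omega
  refine ⟨τc, by omega, hτcn, ?_, hone⟩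
  have hmove := hmov τc (by omega)
  apply move_crit hmove
  right
  rw [← hτc1, he0spec, hone τc (by omega) le_rfl]
  norm_num

end Traces

end BWProof

namespace BWProof

variable {h : ℕ}

/-- The inductive claim: if all children of `v` (a node whose subtree has `m ≥ 2`
levels) are pebbled at time `τ`, and the strict subtree of `v` carries no black
pebbles at time `s ≤ τ` and no white pebbles at time `t ≥ τ`, then at some time
in `[s,t]` the strict subtree of `v` carries at least `⌈m/2⌉ + 1` pebbles. -/
def ClaimStmt (C : ℕ → FConfig (Vt h)) (n m : ℕ) : Prop :=
  ∀ v : Vt h, h - lvl v = m →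
  ∀ s τ t : ℕ, s ≤ τ → τ ≤ t → t ≤ n →
  (∀ d, IsChild 2 h d v → Peb (C τ) d) →
  (∀ u ∈ subo v, (C s).b u = 0) →
  (∀ u ∈ subo v, (C t).w u = 0) →
  ∃ ρ, s ≤ ρ ∧ ρ ≤ t ∧ (m+1)/2 + 1 ≤ pebCount (C ρ) (subo v)

section ChildAnalysis

variable (C : ℕ → FConfig (Vt h)) (n : ℕ)

/-- Analysis of an engaged node `c` (pebbled at time `τ`): it has a critical time
`τc` at which its children are pebbled, together with a window `[sc,tc]`, a heavy
time `ρc`, span facts and coverage facts. -/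
lemma child_analysis
    (hmov : ∀ r < n, FMove (IsChild 2 h) (C r) (C (r+1)))
    (hval : ∀ r ≤ n, (C r).Valid)
    (hwhl : ∀ r ≤ n, (C r).Whole)
    (j : ℕ) (hj2 : 2 ≤ j)
    (hcs : 3 ≤ j → ClaimStmt C n j)
    (c : Vt h) (hcht : h - lvl c = j)
    (S T τ : ℕ) (hSτ : S ≤ τ) (hτT : τ ≤ T) (hTn : T ≤ n)
    (hpeb : Peb (C τ) c)
    (hBc : (C S).b c = 0) (hBsub : ∀ u ∈ subo c, (C S).b u = 0)
    (hWc : (C T).w c = 0) (hWsub : ∀ u ∈ subo c, (C T).w u = 0) :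
    ∃ τc sc tc ρc,
      S ≤ sc ∧ sc ≤ τc ∧ τc ≤ tc ∧ tc ≤ T ∧ sc ≤ ρc ∧ ρc ≤ tc ∧
      (∀ d, IsChild 2 h d c → Peb (C τc) d) ∧
      (∀ u ∈ subo c, (C sc).b u = 0) ∧
      (∀ u ∈ subo c, (C tc).w u = 0) ∧
      (∀ r, min (sc+1) τ ≤ r → r ≤ max τ (tc-1) → ∃ u, InSub c u ∧ Peb (C r) u) ∧
      (∀ r, τc < r → r ≤ τ → Peb (C r) c) ∧
      (∀ r, τ ≤ r → r ≤ τc → Peb (C r) c) ∧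
      ((j+1)/2 + 1 ≤ pebCount (C ρc) (subo c)) ∧
      (j = 2 → ρc = τc) := by
  classical
  -- find the critical time τc
  have main : ∃ τc, S ≤ τc ∧ τc < T ∧
      (∀ d, IsChild 2 h d c → Peb (C τc) d) ∧
      (∀ r, τc < r → r ≤ τ → Peb (C r) c) ∧
      (∀ r, τ ≤ r → r ≤ τc → Peb (C r) c) := by
    rcases peb_b_or_w (hwhl τ (le_trans hτT hTn)) hpeb with hb | hw
    · obtain ⟨τc, h1, h2, h3, h4⟩ :=
        traceB C n hmov hwhl c S τ hSτ (le_trans hτT hTn) hBc hb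
      refine ⟨τc, h1, by omega, ?_, ?_, ?_⟩
      · intro d hd
        show (C τc).b d + (C τc).w d ≠ 0
        rw [h3 d hd]; norm_num
      · intro r hr1 hr2
        exact peb_of_b1 (hval r (by omega)) (h4 r hr1 hr2)
      · intro r hr1 hr2; omega
    · obtain ⟨τc, h1, h2, h3, h4⟩ :=
        traceW C n hmov hwhl c τ T hτT hTn hw hWc
      refine ⟨τc, by omega, h2, ?_, ?_, ?_⟩
      · intro d hd
        show (C τc).b d + (C τc).w d ≠ 0
        rw [h3 d hd]; norm_num
      · intro r hr1 hr2; omega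
      · intro r hr1 hr2
        exact peb_of_w1 (hval r (by omega)) (h4 r hr1 hr2)
  obtain ⟨τc, hSτc, hτcT, hcrit, hE2, hE3⟩ := main
  -- the window start sc
  set P : ℕ → Prop := fun r => S ≤ r ∧ ∀ u ∈ subo c, (C r).b u = 0 with hPdef
  have hPS : P S := ⟨le_rfl, hBsub⟩
  set sc := Nat.findGreatest P τc with hscdef
  have hsc_le : sc ≤ τc := Nat.findGreatest_le τc
  have hS_sc : S ≤ sc := Nat.le_findGreatest hSτc hPS
  have hsc_spec : P sc := Nat.findGreatest_spec hSτc hPS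
  have hZ1 : ∀ r, sc < r → r ≤ τc → ∃ u ∈ subo c, (C r).b u ≠ 0 := by
    intro r hr1 hr2
    have hnP : ¬ (S ≤ r ∧ ∀ u ∈ subo c, (C r).b u = 0) :=
      Nat.findGreatest_is_greatest (P := P) hr1 hr2
    push_neg at hnP
    exact hnP (by omega)
  -- the window end tc
  have hexW : ∃ e, ∀ u ∈ subo c, (C (τc + e)).w u = 0 :=
    ⟨T - τc, by rw [Nat.add_sub_cancel' (le_of_lt hτcT)]; exact hWsub⟩
  set e0 := Nat.find hexW with he0def
  set tc := τc + e0 with htcdef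
  have htc_spec : ∀ u ∈ subo c, (C tc).w u = 0 := Nat.find_spec hexW
  have he0le : e0 ≤ T - τc :=
    Nat.find_min' hexW (by rw [Nat.add_sub_cancel' (le_of_lt hτcT)]; exact hWsub)
  have htc_le : tc ≤ T := by omega
  have hτc_tc : τc ≤ tc := by omega
  have hZ2 : ∀ r, τc ≤ r → r < tc → ∃ u ∈ subo c, (C r).w u ≠ 0 := by
    intro r hr1 hr2
    have hlt : r - τc < e0 := by omega
    have := Nat.find_min hexW hlt
    push_neg at this
    obtain ⟨u, hu, hwu⟩ := this
    rw [Nat.add_sub_cancel' hr1] at hwu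
    exact ⟨u, hu, hwu⟩
  -- the heavy time ρc
  have hrc : ∃ ρc, sc ≤ ρc ∧ ρc ≤ tc ∧
      ((j+1)/2 + 1 ≤ pebCount (C ρc) (subo c)) ∧ (j = 2 → ρc = τc) := by
    by_cases hj : j = 2
    · subst hj
      refine ⟨τc, hsc_le, hτc_tc, ?_, fun _ => rfl⟩
      have hlt : lvl c + 1 < h := by have := lvl_lt c; omega
      have h0 := hcrit _ (nchild_isChild c 0 hlt)
      have h1 := hcrit _ (nchild_isChild c 1 hlt)
      have hb := two_le_pebCount (child_mem_subo (nchild_isChild c 0 hlt))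
        (child_mem_subo (nchild_isChild c 1 hlt)) (nchild_ne c hlt) h0 h1
      omega
    · have h3j : 3 ≤ j := by omega
      obtain ⟨ρc, hr1, hr2, hr3⟩ := hcs h3j c hcht sc τc tc hsc_le hτc_tc
        (le_trans htc_le hTn) hcrit hsc_spec.2 htc_spec
      exact ⟨ρc, hr1, hr2, hr3, fun hc => absurd hc hj⟩
  obtain ⟨ρc, hρ1, hρ2, hρ3, hρ4⟩ := hrc
  refine ⟨τc, sc, tc, ρc, hS_sc, hsc_le, hτc_tc, htc_le, hρ1, hρ2,
    hcrit, hsc_spec.2, htc_spec, ?_, hE2, hE3, hρ3, hρ4⟩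
  -- coverage
  intro r hr1 hr2
  rcases le_or_gt r τc with hrτc | hrτc
  · rcases lt_or_ge sc r with hscr | hscr
    · obtain ⟨u, hu, hbu⟩ := hZ1 r hscr hrτc
      exact ⟨u, (mem_subo.1 hu).1, peb_of_b_ne (hval r (by omega)) hbu⟩
    · have hτr : τ ≤ r := by omega
      exact ⟨c, insub_refl c, hE3 r hτr hrτc⟩
  · rcases le_or_gt r τ with hrτ | hrτ
    · exact ⟨c, insub_refl c, hE2 r hrτc hrτ⟩
    · have hrtc : r < tc := by omega
      obtain ⟨u, hu, hwu⟩ := hZ2 r (by omega) hrtc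
      exact ⟨u, (mem_subo.1 hu).1, peb_of_w_ne (hval r (by omega)) hwu⟩

end ChildAnalysis

end BWProof

namespace BWProof

variable {h : ℕ}

lemma not_in_subo_sibling {x y u : Vt h} (hl : lvl x = lvl y) (hxy : x ≠ y)
    (hyu : InSub y u) : u ∉ subo x :=
  fun hc => hxy (insub_sibling (mem_subo.1 hc).1 hyu hl)

section Claim

variable (C : ℕ → FConfig (Vt h)) (n : ℕ)

/-- the contradiction in the "left-right" case of the odd step -/
lemma lr_contra
    (hmov : ∀ r < n, FMove (IsChild 2 h) (C r) (C (r+1)))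
    (hval : ∀ r ≤ n, (C r).Valid)
    (hwhl : ∀ r ≤ n, (C r).Whole)
    (m : ℕ) (hm3 : 3 ≤ m) (hmo : m % 2 = 1)
    (hcs2 : 3 ≤ m - 2 → ClaimStmt C n (m-2))
    (v x y : Vt h)
    (hcx : IsChild 2 h x v) (hcy : IsChild 2 h y v) (hxy : x ≠ y)
    (hlxy : lvl x = lvl y)
    (hhtx : h - lvl x = m - 1)
    (s τ t : ℕ) (hsτ : s ≤ τ) (hτt : τ ≤ t) (htn : t ≤ n)
    (hBAD : ∀ ρ, s ≤ ρ → ρ ≤ t → pebCount (C ρ) (subo v) ≤ (m-1)/2 + 1)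
    -- x data
    (τx sx tx : ℕ) (hssx : s ≤ sx) (h1x : sx ≤ τx) (h2x : τx ≤ tx) (h3x : tx ≤ t)
    (hcritx : ∀ d, IsChild 2 h d x → Peb (C τx) d)
    (hNoBx : ∀ u ∈ subo x, (C sx).b u = 0)
    (hNoWx : ∀ u ∈ subo x, (C tx).w u = 0)
    (hE2x : ∀ r, τx < r → r ≤ τ → Peb (C r) x)
    -- y data
    (τy sy ty ρy : ℕ) (hssy : s ≤ sy) (h1y : sy ≤ τy) (h2y : τy ≤ ty) (h3y : ty ≤ t)
    (hρy1 : sy ≤ ρy) (hρy2 : ρy ≤ ty)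
    (hcovy : ∀ r, min (sy+1) τ ≤ r → r ≤ max τ (ty-1) → ∃ u, InSub y u ∧ Peb (C r) u)
    (hE3y : ∀ r, τ ≤ r → r ≤ τy → Peb (C r) y)
    (hboundy : (m-1)/2 + 1 ≤ pebCount (C ρy) (subo y))
    (hj2y : m - 1 = 2 → ρy = τy)
    -- LR facts
    (hLR1 : tx ≤ ρy) (hLR2 : τ < ρy) :
    False := by
  -- emptiness outside subo y at ρy
  have hsubyv : subo y ⊆ subo v := subo_child_subset hcy
  have hempy : ∀ u ∈ subo v, u ∉ subo y → ¬ Peb (C ρy) u :=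
    empty_outside hsubyv (hBAD ρy (by omega) (by omega)) hboundy
  rcases eq_or_lt_of_le hm3 with hm3' | hm5
  · -- m = 3 : ρy = τy and y is pebbled at ρy, contradiction
    have hρyτy : ρy = τy := hj2y (by omega)
    have hpy : Peb (C ρy) y := hE3y ρy (by omega) (by omega)
    exact hempy y (child_mem_subo hcy) (fun hc => (mem_subo.1 hc).2 rfl) hpy
  · -- m ≥ 5 : descend into the subtree of x
    have hm4 : 4 ≤ m - 1 := by omega
    have hltx : lvl x + 1 < h := by have := lvl_lt x; omega
    set g0 := nchild x 0 hltx with hg0def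
    set g1 := nchild x 1 hltx with hg1def
    have hcg0 : IsChild 2 h g0 x := nchild_isChild x 0 hltx
    have hcg1 : IsChild 2 h g1 x := nchild_isChild x 1 hltx
    have hg01 : g0 ≠ g1 := nchild_ne x hltx
    have hlg : lvl g0 = lvl g1 := rfl
    have hhtg0 : h - lvl g0 = m - 2 := by
      have : lvl g0 = lvl x + 1 := rfl
      omega
    have hhtg1 : h - lvl g1 = m - 2 := by
      have : lvl g1 = lvl x + 1 := rfl
      omega
    -- analyses at the two grandchildren
    have A0 := child_analysis C n hmov hval hwhl (m-2) (by omega) hcs2 g0 hhtg0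
      sx tx τx h1x h2x (by omega) (hcritx g0 hcg0)
      (hNoBx g0 (child_mem_subo hcg0))
      (fun u hu => hNoBx u (subo_child_subset hcg0 hu))
      (hNoWx g0 (child_mem_subo hcg0))
      (fun u hu => hNoWx u (subo_child_subset hcg0 hu))
    have A1 := child_analysis C n hmov hval hwhl (m-2) (by omega) hcs2 g1 hhtg1
      sx tx τx h1x h2x (by omega) (hcritx g1 hcg1)
      (hNoBx g1 (child_mem_subo hcg1))
      (fun u hu => hNoBx u (subo_child_subset hcg1 hu))
      (hNoWx g1 (child_mem_subo hcg1))
      (fun u hu => hNoWx u (subo_child_subset hcg1 hu))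
    obtain ⟨κ0, a0, b0, ρ0, ha0, h10, h20, h30, hρ01, hρ02,
      hcrit0, hNoB0, hNoW0, hcov0, hE20, hE30, hbound0, hj20⟩ := A0
    obtain ⟨κ1, a1, b1, ρ1, ha1, h11, h21, h31, hρ11, hρ12,
      hcrit1, hNoB1, hNoW1, hcov1, hE21, hE31, hbound1, hj21⟩ := A1
    have hbnd0 : (m-1)/2 + 1 ≤ pebCount (C ρ0) (subo g0) := by
      have : (m-2+1)/2 + 1 = (m-1)/2 + 1 := by omega
      omega
    have hbnd1 : (m-1)/2 + 1 ≤ pebCount (C ρ1) (subo g1) := by omega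
    have hsubg0 : subo g0 ⊆ subo v := subset_trans (subo_child_subset hcg0) (subo_child_subset hcx)
    have hsubg1 : subo g1 ⊆ subo v := subset_trans (subo_child_subset hcg1) (subo_child_subset hcx)
    -- bounds of ρ's in [s,t]
    have hρ0st : s ≤ ρ0 ∧ ρ0 ≤ t := by omega
    have hρ1st : s ≤ ρ1 ∧ ρ1 ≤ t := by omega
    have hemp0 : ∀ u ∈ subo v, u ∉ subo g0 → ¬ Peb (C ρ0) u :=
      empty_outside hsubg0 (hBAD ρ0 hρ0st.1 hρ0st.2) hbnd0
    have hemp1 : ∀ u ∈ subo v, u ∉ subo g1 → ¬ Peb (C ρ1) u :=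
      empty_outside hsubg1 (hBAD ρ1 hρ1st.1 hρ1st.2) hbnd1
    -- membership helpers
    have hmemg : ∀ {g : Vt h}, IsChild 2 h g x → ∀ {u}, InSub g u → u ∈ subo v := by
      intro g hcg u hu
      exact (subo_child_subset hcx) (mem_subo_of_insub_child hcg hu)
    -- escapes of ρ0 w.r.t. g1 and vice versa
    have hesc0 : (ρ0 ≤ a1 ∧ ρ0 < τx) ∨ (b1 ≤ ρ0 ∧ τx < ρ0) := by
      by_contra hno
      push_neg at hno
      have hc1 : min (a1+1) τx ≤ ρ0 ∧ ρ0 ≤ max τx (b1-1) := by omega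
      obtain ⟨u, hu, hp⟩ := hcov1 ρ0 hc1.1 hc1.2
      exact hemp0 u (hmemg hcg1 hu)
        (not_in_subo_sibling hlg hg01 hu) hp
    have hesc1 : (ρ1 ≤ a0 ∧ ρ1 < τx) ∨ (b0 ≤ ρ1 ∧ τx < ρ1) := by
      by_contra hno
      push_neg at hno
      have hc1 : min (a0+1) τx ≤ ρ1 ∧ ρ1 ≤ max τx (b0-1) := by omega
      obtain ⟨u, hu, hp⟩ := hcov0 ρ1 hc1.1 hc1.2
      exact hemp1 u (hmemg hcg0 hu)
        (not_in_subo_sibling hlg.symm (Ne.symm hg01) hu) hp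
    -- the final chain, for whichever grandchild is "late"
    have final : ∀ (g : Vt h), IsChild 2 h g x → ∀ (ρg tg : ℕ),
        (∀ u ∈ subo v, u ∉ subo g → ¬ Peb (C ρg) u) →
        ρg ≤ tg → tg ≤ tx → τx < ρg → False := by
      intro g hcg ρg tg hemp hg1 hg2 hg3
      -- x is empty at ρg, so ρg is outside the span of x: ρg > τ
      have hxnotg : x ∉ subo g := by
        intro hc
        have := insub_lvl (mem_subo.1 hc).1
        have h1 : lvl g = lvl x + 1 := child_lvl hcg
        omega
      have hxempty : ¬ Peb (C ρg) x := hemp x (child_mem_subo hcx) hxnotg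
      have hρgτ : τ < ρg := by
        by_contra hle
        push_neg at hle
        exact hxempty (hE2x ρg hg3 hle)
      -- the subtree of y is empty at ρg, so ρg escapes y's coverage zone: ρg ≥ ty
      have hyesc : ρg < min (sy+1) τ ∨ max τ (ty-1) < ρg := by
        by_contra hno
        push_neg at hno
        obtain ⟨u, hu, hp⟩ := hcovy ρg hno.1 hno.2
        refine hemp u (mem_subo_of_insub_child hcy hu) ?_ hp
        intro hc
        have hxu : InSub x u := insub_trans (insub_of_child hcg) (mem_subo.1 hc).1
        exact hxy (insub_sibling hxu hu hlxy)
      have hρgty : ty ≤ ρg := by omega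
      -- squeeze: ty ≤ ρg ≤ tg ≤ tx ≤ ρy ≤ ty, so ρg = ρy
      have hEq : ρg = ρy := by omega
      -- contradiction: subtree of y is nonempty at ρy
      obtain ⟨u, hu, hp⟩ := exists_peb_of_pos (A := C ρy) (S := subo y) (by omega)
      rw [← hEq] at hp
      refine hemp u (hsubyv hu) ?_ hp
      intro hc
      have hxu : InSub x u := insub_trans (insub_of_child hcg) (mem_subo.1 hc).1
      exact hxy (insub_sibling hxu (mem_subo.1 hu).1 hlxy)
    -- case analysis on the pair of escapes
    rcases hesc1 with ⟨hA, hB⟩ | ⟨hA, hB⟩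
    · rcases hesc0 with ⟨hA', hB'⟩ | ⟨hA', hB'⟩
      · -- both early: ρ0 = ρ1
        have hEq : ρ0 = ρ1 := by omega
        obtain ⟨u, hu, hp⟩ := exists_peb_of_pos (A := C ρ1) (S := subo g1) (by omega)
        rw [← hEq] at hp
        exact hemp0 u (hsubg1 hu)
          (not_in_subo_sibling hlg hg01 (mem_subo.1 hu).1) hp
      · -- g0 late
        exact final g0 hcg0 ρ0 b0 hemp0 (by omega) (by omega) hB'
    · -- g1 late
      exact final g1 hcg1 ρ1 b1 hemp1 (by omega) (by omega) hB

end Claim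

end BWProof

namespace BWProof

variable {h : ℕ}

theorem claimAll (C : ℕ → FConfig (Vt h)) (n : ℕ)
    (hmov : ∀ r < n, FMove (IsChild 2 h) (C r) (C (r+1)))
    (hval : ∀ r ≤ n, (C r).Valid)
    (hwhl : ∀ r ≤ n, (C r).Whole) :
    ∀ m, 2 ≤ m → ClaimStmt C n m := by
  intro m
  induction m using Nat.strong_induction_on with
  | _ m IH =>
    intro hm2 v hht s τ t hsτ hτt htn hch hB hW
    have hlt : lvl v + 1 < h := by have := lvl_lt v; omega
    set x := nchild v 0 hlt with hxdef
    set y := nchild v 1 hlt with hydef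
    have hcx : IsChild 2 h x v := nchild_isChild v 0 hlt
    have hcy : IsChild 2 h y v := nchild_isChild v 1 hlt
    have hxy : x ≠ y := nchild_ne v hlt
    have hlxy : lvl x = lvl y := rfl
    rcases eq_or_lt_of_le hm2 with hm2' | hm3
    · -- base case m = 2
      refine ⟨τ, hsτ, hτt, ?_⟩
      have h2 := two_le_pebCount (child_mem_subo hcx) (child_mem_subo hcy) hxy
        (hch x hcx) (hch y hcy)
      omega
    · -- step, m ≥ 3
      have hlx : lvl x = lvl v + 1 := rfl
      have hly : lvl y = lvl v + 1 := rfl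
      have hhtx : h - lvl x = m - 1 := by omega
      have hhty : h - lvl y = m - 1 := by omega
      have hcs1 : 3 ≤ m - 1 → ClaimStmt C n (m-1) :=
        fun _ => IH (m-1) (by omega) (by omega)
      have Ax := child_analysis C n hmov hval hwhl (m-1) (by omega) hcs1 x hhtx
        s t τ hsτ hτt htn (hch x hcx) (hB x (child_mem_subo hcx))
        (fun u hu => hB u (subo_child_subset hcx hu))
        (hW x (child_mem_subo hcx))
        (fun u hu => hW u (subo_child_subset hcx hu))
      obtain ⟨τx, sx, tx, ρx, hssx, h1x, h2x, h3x, hρx1, hρx2,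
        hcritx, hNoBx, hNoWx, hcovx, hE2x, hE3x, hboundx, hj2x⟩ := Ax
      rcases Nat.even_or_odd m with hme | hmo
      · -- even case: the bound at ρx suffices
        rw [Nat.even_iff] at hme
        refine ⟨ρx, by omega, by omega, ?_⟩
        have hmono := pebCount_le_of_subset (A := C ρx) (subo_child_subset hcx)
        omega
      · -- odd case
        rw [Nat.odd_iff] at hmo
        by_contra hcon
        push_neg at hcon
        have hBAD : ∀ ρ, s ≤ ρ → ρ ≤ t → pebCount (C ρ) (subo v) ≤ (m-1)/2 + 1 := by
          intro ρ hρ1 hρ2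
          have := hcon ρ hρ1 hρ2
          omega
        have Ay := child_analysis C n hmov hval hwhl (m-1) (by omega) hcs1 y hhty
          s t τ hsτ hτt htn (hch y hcy) (hB y (child_mem_subo hcy))
          (fun u hu => hB u (subo_child_subset hcy hu))
          (hW y (child_mem_subo hcy))
          (fun u hu => hW u (subo_child_subset hcy hu))
        obtain ⟨τy, sy, ty, ρy, hssy, h1y, h2y, h3y, hρy1, hρy2,
          hcrity, hNoBy, hNoWy, hcovy, hE2y, hE3y, hboundy, hj2y⟩ := Ay
        have hcs2 : 3 ≤ m - 2 → ClaimStmt C n (m-2) :=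
          fun _ => IH (m-2) (by omega) (by omega)
        -- child bounds in the uniform (m-1)/2 + 1 form
        have hbx : (m-1)/2 + 1 ≤ pebCount (C ρx) (subo x) := by omega
        have hby : (m-1)/2 + 1 ≤ pebCount (C ρy) (subo y) := by omega
        -- emptiness at the heavy times
        have hempx : ∀ u ∈ subo v, u ∉ subo x → ¬ Peb (C ρx) u :=
          empty_outside (subo_child_subset hcx) (hBAD ρx (by omega) (by omega)) hbx
        have hempy : ∀ u ∈ subo v, u ∉ subo y → ¬ Peb (C ρy) u :=
          empty_outside (subo_child_subset hcy) (hBAD ρy (by omega) (by omega)) hby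
        -- escapes
        have hescx : (ρx ≤ sy ∧ ρx < τ) ∨ (ty ≤ ρx ∧ τ < ρx) := by
          by_contra hno
          push_neg at hno
          have hc1 : min (sy+1) τ ≤ ρx ∧ ρx ≤ max τ (ty-1) := by omega
          obtain ⟨u, hu, hp⟩ := hcovy ρx hc1.1 hc1.2
          exact hempx u (mem_subo_of_insub_child hcy hu)
            (not_in_subo_sibling hlxy hxy hu) hp
        have hescy : (ρy ≤ sx ∧ ρy < τ) ∨ (tx ≤ ρy ∧ τ < ρy) := by
          by_contra hno
          push_neg at hno
          have hc1 : min (sx+1) τ ≤ ρy ∧ ρy ≤ max τ (tx-1) := by omega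
          obtain ⟨u, hu, hp⟩ := hcovx ρy hc1.1 hc1.2
          exact hempy u (mem_subo_of_insub_child hcx hu)
            (not_in_subo_sibling hlxy.symm (Ne.symm hxy) hu) hp
        rcases hescx with ⟨hxA, hxB⟩ | ⟨hxA, hxB⟩
        · rcases hescy with ⟨hyA, hyB⟩ | ⟨hyA, hyB⟩
          · -- both early: squeeze ρx = ρy
            have hEq : ρx = ρy := by omega
            obtain ⟨u, hu, hp⟩ := exists_peb_of_pos (A := C ρy) (S := subo y) (by omega)
            rw [← hEq] at hp
            exact hempx u (subo_child_subset hcy hu)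
              (not_in_subo_sibling hlxy hxy (mem_subo.1 hu).1) hp
          · -- LR: x early, y late
            exact lr_contra C n hmov hval hwhl m (by omega) hmo hcs2 v x y
              hcx hcy hxy hlxy hhtx s τ t hsτ hτt htn hBAD
              τx sx tx hssx h1x h2x h3x hcritx hNoBx hNoWx hE2x
              τy sy ty ρy hssy h1y h2y h3y hρy1 hρy2 hcovy hE3y hby hj2y
              hyA hyB
        · rcases hescy with ⟨hyA, hyB⟩ | ⟨hyA, hyB⟩
          · -- RL: y early, x late
            exact lr_contra C n hmov hval hwhl m (by omega) hmo hcs2 v y x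
              hcy hcx (Ne.symm hxy) hlxy.symm hhty s τ t hsτ hτt htn hBAD
              τy sy ty hssy h1y h2y h3y hcrity hNoBy hNoWy hE2y
              τx sx tx ρx hssx h1x h2x h3x hρx1 hρx2 hcovx hE3x hbx hj2x
              hxA hxB
          · -- both late: squeeze ρx = ρy
            have hEq : ρx = ρy := by omega
            obtain ⟨u, hu, hp⟩ := exists_peb_of_pos (A := C ρy) (S := subo y) (by omega)
            rw [← hEq] at hp
            exact hempx u (subo_child_subset hcy hu)
              (not_in_subo_sibling hlxy hxy (mem_subo.1 hu).1) hp

end BWProof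

namespace BWProof

variable {h : ℕ}

/-- configuration given by a set of black and a set of white pebbles -/
def cfg (B W : Finset (Vt h)) : FConfig (Vt h) :=
  ⟨fun u => if u ∈ B then 1 else 0, fun u => if u ∈ W then 1 else 0⟩

lemma cfg_b (B W : Finset (Vt h)) (u : Vt h) :
    (cfg B W).b u = if u ∈ B then 1 else 0 := rfl
lemma cfg_w (B W : Finset (Vt h)) (u : Vt h) :
    (cfg B W).w u = if u ∈ W then 1 else 0 := rfl

lemma cfg_whole (B W : Finset (Vt h)) : (cfg B W).Whole := by
  intro u
  constructor <;> [rw [cfg_b]; rw [cfg_w]] <;> split <;> simp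

lemma cfg_valid {B W : Finset (Vt h)} (hd : ∀ u ∈ B, u ∉ W) : (cfg B W).Valid := by
  intro u
  rw [cfg_b, cfg_w]
  by_cases hB : u ∈ B
  · have hW : u ∉ W := hd u hB
    rw [if_pos hB, if_neg hW]; norm_num
  · rw [if_neg hB]
    split <;> norm_num

lemma cfg_weight (B W : Finset (Vt h)) :
    (cfg B W).weight = (B.card : ℝ) + W.card := by
  unfold FConfig.weight
  simp only [cfg_b, cfg_w]
  rw [Finset.sum_add_distrib]
  congr 1 <;>
    rw [Finset.sum_ite_mem, Finset.univ_inter, Finset.sum_const, nsmul_eq_mul, mul_one]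

lemma cfg_empty : cfg (∅ : Finset (Vt h)) ∅ = FConfig.zero (Vt h) := by
  unfold cfg FConfig.zero
  congr 1 <;> funext u <;> simp

/-- reachability with all intermediate configurations whole, valid and of weight `≤ p` -/
def Reach (p : ℝ) (A B : FConfig (Vt h)) : Prop :=
  ∃ (N : ℕ) (c : ℕ → FConfig (Vt h)), c 0 = A ∧ c N = B ∧
    (∀ i ≤ N, (c i).Valid ∧ (c i).Whole ∧ (c i).weight ≤ p) ∧
    (∀ i < N, FMove (IsChild 2 h) (c i) (c (i+1)))

lemma reach_refl {p : ℝ} {A : FConfig (Vt h)} (hv : A.Valid) (hw : A.Whole)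
    (hwt : A.weight ≤ p) : Reach p A A :=
  ⟨0, fun _ => A, rfl, rfl, fun _ _ => ⟨hv, hw, hwt⟩, fun i hi => absurd hi (by omega)⟩

lemma reach_mono {p q : ℝ} {A B : FConfig (Vt h)} (hpq : p ≤ q)
    (hr : Reach p A B) : Reach q A B := by
  obtain ⟨N, c, h0, h1, h2, h3⟩ := hr
  exact ⟨N, c, h0, h1, fun i hi => ⟨(h2 i hi).1, (h2 i hi).2.1, le_trans (h2 i hi).2.2 hpq⟩, h3⟩

lemma reach_trans {p : ℝ} {A B C : FConfig (Vt h)}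
    (h1 : Reach p A B) (h2 : Reach p B C) : Reach p A C := by
  obtain ⟨N₁, c₁, h10, h11, h12, h13⟩ := h1
  obtain ⟨N₂, c₂, h20, h21, h22, h23⟩ := h2
  refine ⟨N₁ + N₂, fun i => if i < N₁ then c₁ i else c₂ (i - N₁), ?_, ?_, ?_, ?_⟩
  · show (if 0 < N₁ then c₁ 0 else c₂ (0 - N₁)) = A
    by_cases hN : 0 < N₁
    · rw [if_pos hN]; exact h10
    · rw [if_neg hN]
      have hN0 : N₁ = 0 := by omega
      rw [Nat.zero_sub, h20, ← h11, hN0]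
      exact h10
  · show (if N₁ + N₂ < N₁ then c₁ (N₁+N₂) else c₂ (N₁ + N₂ - N₁)) = C
    rw [if_neg (by omega), Nat.add_sub_cancel_left]; exact h21
  · intro i hi
    dsimp only
    by_cases hiN : i < N₁
    · rw [if_pos hiN]; exact h12 i (by omega)
    · rw [if_neg hiN]; exact h22 (i - N₁) (by omega)
  · intro i hi
    dsimp only
    by_cases hiN : i + 1 < N₁
    · rw [if_pos (by omega), if_pos hiN]
      exact h13 i (by omega)
    · by_cases hiN' : i < N₁
      · -- i + 1 = N₁
        rw [if_pos hiN', if_neg hiN]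
        have hEq : i + 1 = N₁ := by omega
        have : c₂ (i + 1 - N₁) = c₁ (i+1) := by
          rw [hEq, Nat.sub_self, h20, ← h11]
        rw [this]
        exact h13 i (by omega)
      · rw [if_neg hiN', if_neg hiN]
        have : i + 1 - N₁ = (i - N₁) + 1 := by omega
        rw [this]
        exact h23 (i - N₁) (by omega)

lemma reach_single {p : ℝ} {A B : FConfig (Vt h)}
    (hm : FMove (IsChild 2 h) A B)
    (hv1 : A.Valid) (hw1 : A.Whole) (hwt1 : A.weight ≤ p)
    (hv2 : B.Valid) (hw2 : B.Whole) (hwt2 : B.weight ≤ p) : Reach p A B := by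
  refine ⟨1, fun i => if i = 0 then A else B, by simp, by simp, ?_, ?_⟩
  · intro i _
    dsimp only
    by_cases hi : i = 0
    · rw [if_pos hi]; exact ⟨hv1, hw1, hwt1⟩
    · rw [if_neg hi]; exact ⟨hv2, hw2, hwt2⟩
  · intro i hi
    have : i = 0 := by omega
    subst this
    show FMove (IsChild 2 h) (if 0 = 0 then A else B) (if 0 + 1 = 0 then A else B)
    rw [if_pos rfl, if_neg (by omega : ¬ (0 + 1 = 0))]
    exact hm

/-- move: remove a black pebble -/
lemma move_removeBlack (B W : Finset (Vt h)) (v : Vt h) :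
    FMove (IsChild 2 h) (cfg B W) (cfg (B.erase v) W) := by
  left
  refine ⟨v, ?_, rfl, ?_⟩
  · rw [cfg_b, cfg_b]
    simp only [Finset.mem_erase, ne_eq, not_true_eq_false, false_and, if_false]
    split <;> norm_num
  · intro u hu
    constructor
    · rw [cfg_b, cfg_b]
      congr 1
      simp [Finset.mem_erase, hu]
    · rfl

/-- move: add a white pebble -/
lemma move_addWhite (B W : Finset (Vt h)) (v : Vt h) :
    FMove (IsChild 2 h) (cfg B W) (cfg B (insert v W)) := by
  right; left
  refine ⟨v, rfl, ?_, ?_⟩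
  · rw [cfg_w, cfg_w]
    simp only [Finset.mem_insert, true_or, if_true]
    split <;> norm_num
  · intro u hu
    refine ⟨rfl, ?_⟩
    rw [cfg_w, cfg_w]
    congr 1
    simp [Finset.mem_insert, hu]

/-- move: place/slide a black pebble onto `v`, removing black pebbles from a set `K`
of children of `v`, and removing any white pebble from `v` -/
lemma move_slide (B W : Finset (Vt h)) (v : Vt h) (K : Finset (Vt h))
    (hd : ∀ u ∈ B, u ∉ W)
    (hKch : ∀ u ∈ K, IsChild 2 h u v)
    (hch : ∀ c, IsChild 2 h c v → (c ∈ B ∨ c ∈ W)) :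
    FMove (IsChild 2 h) (cfg B W) (cfg (insert v (B \ K)) (W.erase v)) := by
  right; right
  refine ⟨v, ?_, ?_, ?_, ?_, ?_⟩
  · intro c hc
    rw [cfg_b, cfg_w]
    rcases hch c hc with hcB | hcW
    · rw [if_pos hcB, if_neg (hd c hcB)]; norm_num
    · rw [if_pos hcW, if_neg (fun hcB => hd c hcB hcW)]; norm_num
  · rw [cfg_b, cfg_b, if_pos (Finset.mem_insert_self v _)]
    split <;> norm_num
  · left
    rw [cfg_w]
    simp
  · intro c hc
    have hcv : c ≠ v := not_child_self hc
    have hcK : v ∉ K := fun hvK => not_child_self (hKch v hvK) rfl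
    constructor
    · rw [cfg_b, cfg_b]
      by_cases hcB : c ∈ B \ K
      · rw [if_pos (Finset.mem_insert_of_mem hcB), if_pos (Finset.mem_sdiff.1 hcB).1]
      · rw [if_neg (fun hmem => hcB (by
          rcases Finset.mem_insert.1 hmem with hEq | hmem'
          · exact absurd hEq hcv
          · exact hmem'))]
        split <;> norm_num
    · rw [cfg_w, cfg_w]
      congr 1
      simp [Finset.mem_erase, hcv]
  · intro u huv _
    have huK : u ∉ K := fun huK => by
      have := hKch u huK
      exact ‹¬ IsChild 2 h u v› this
    constructor
    · rw [cfg_b, cfg_b]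
      congr 1
      simp [Finset.mem_insert, Finset.mem_sdiff, huv, huK]
    · rw [cfg_w, cfg_w]
      congr 1
      simp [Finset.mem_erase, huv]

/-- move: remove the white pebble from `v` (whose children are all pebbled),
removing also black pebbles from a set `K` of children of `v`. -/
lemma move_discharge (B W : Finset (Vt h)) (v : Vt h) (K : Finset (Vt h))
    (hd : ∀ u ∈ B, u ∉ W)
    (hvB : v ∉ B)
    (hKch : ∀ u ∈ K, IsChild 2 h u v)
    (hch : ∀ c, IsChild 2 h c v → (c ∈ B ∨ c ∈ W)) :
    FMove (IsChild 2 h) (cfg B W) (cfg (B \ K) (W.erase v)) := by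
  right; right
  refine ⟨v, ?_, ?_, ?_, ?_, ?_⟩
  · intro c hc
    rw [cfg_b, cfg_w]
    rcases hch c hc with hcB | hcW
    · rw [if_pos hcB, if_neg (hd c hcB)]; norm_num
    · rw [if_pos hcW, if_neg (fun hcB => hd c hcB hcW)]; norm_num
  · have hvK : v ∉ K := fun hvK => not_child_self (hKch v hvK) rfl
    rw [cfg_b, cfg_b]
    rw [if_neg hvB, if_neg (fun hmem => hvB (Finset.mem_sdiff.1 hmem).1)]
  · left
    rw [cfg_w]
    simp
  · intro c hc
    have hcv : c ≠ v := not_child_self hc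
    constructor
    · rw [cfg_b, cfg_b]
      by_cases hcB : c ∈ B \ K
      · rw [if_pos hcB, if_pos (Finset.mem_sdiff.1 hcB).1]
      · rw [if_neg hcB]
        split <;> norm_num
    · rw [cfg_w, cfg_w]
      congr 1
      simp [Finset.mem_erase, hcv]
  · intro u huv hnch
    have huK : u ∉ K := fun huK => hnch (hKch u huK)
    constructor
    · rw [cfg_b, cfg_b]
      congr 1
      simp [Finset.mem_sdiff, huK]
    · rw [cfg_w, cfg_w]
      congr 1
      simp [Finset.mem_erase, huv]

/-- package: a single move between `cfg` configurations, with weight bounds -/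
lemma reach_of_move {p : ℝ} {B₁ W₁ B₂ W₂ : Finset (Vt h)}
    (hm : FMove (IsChild 2 h) (cfg B₁ W₁) (cfg B₂ W₂))
    (hd1 : ∀ u ∈ B₁, u ∉ W₁) (hd2 : ∀ u ∈ B₂, u ∉ W₂)
    (hw1 : (B₁.card : ℝ) + W₁.card ≤ p) (hw2 : (B₂.card : ℝ) + W₂.card ≤ p) :
    Reach p (cfg B₁ W₁) (cfg B₂ W₂) :=
  reach_single hm (cfg_valid hd1) (cfg_whole _ _) (by rw [cfg_weight]; exact hw1)
    (cfg_valid hd2) (cfg_whole _ _) (by rw [cfg_weight]; exact hw2)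

end BWProof

namespace BWProof

variable {h : ℕ}

def Mval (m : ℕ) : ℕ := if m ≤ 3 then m else m / 2 + 2
def Dval (m : ℕ) : ℕ := if m = 1 then 1 else m / 2 + 2

section SetHelpers

variable {α : Type*} [DecidableEq α]

lemma ins_sdiff_one {a : α} {X : Finset α} (ha : a ∉ X) : (insert a X) \ {a} = X := by
  ext w
  simp only [Finset.mem_sdiff, Finset.mem_insert, Finset.mem_singleton]
  constructor
  · rintro ⟨hw | hw, hne⟩
    · exact absurd hw hne
    · exact hw
  · intro hw
    exact ⟨Or.inr hw, fun hEq => ha (hEq ▸ hw)⟩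

lemma ins_sdiff_two {a b : α} {X : Finset α} (ha : a ∉ X) (hb : b ∉ X) :
    (insert b (insert a X)) \ {a, b} = X := by
  ext w
  simp only [Finset.mem_sdiff, Finset.mem_insert, Finset.mem_singleton]
  constructor
  · rintro ⟨hw | hw | hw, hne⟩
    · exact absurd (Or.inr hw) hne
    · exact absurd (Or.inl hw) hne
    · exact hw
  · intro hw
    refine ⟨Or.inr (Or.inr hw), ?_⟩
    rintro (rfl | rfl)
    · exact ha hw
    · exact hb hw

lemma erase_ins_deep2 {u c d : α} {W : Finset α} (hc : u ≠ c) (hd : u ≠ d) (hW : u ∉ W) :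
    (insert c (insert d (insert u W))).erase u = insert c (insert d W) := by
  ext w
  simp only [Finset.mem_erase, Finset.mem_insert]
  constructor
  · rintro ⟨hne, hw | hw | hw | hw⟩
    · exact Or.inl hw
    · exact Or.inr (Or.inl hw)
    · exact absurd hw hne
    · exact Or.inr (Or.inr hw)
  · rintro (hw | hw | hw)
    · refine ⟨?_, Or.inl hw⟩; rintro rfl; exact hc hw
    · refine ⟨?_, Or.inr (Or.inl hw)⟩; rintro rfl; exact hd hw
    · exact ⟨fun hEq => hW (hEq ▸ hw), Or.inr (Or.inr (Or.inr hw))⟩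

lemma erase_ins_deep1 {u c : α} {W : Finset α} (hc : u ≠ c) (hW : u ∉ W) :
    (insert c (insert u W)).erase u = insert c W := by
  ext w
  simp only [Finset.mem_erase, Finset.mem_insert]
  constructor
  · rintro ⟨hne, hw | hw | hw⟩
    · exact Or.inl hw
    · exact absurd hw hne
    · exact Or.inr hw
  · rintro (hw | hw)
    · refine ⟨?_, Or.inl hw⟩; rintro rfl; exact hc hw
    · exact ⟨fun hEq => hW (hEq ▸ hw), Or.inr (Or.inr hw)⟩

lemma ins_comm (a b : α) (s : Finset α) : insert a (insert b s) = insert b (insert a s) := by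
  ext w
  simp only [Finset.mem_insert]
  tauto

end SetHelpers

lemma ne_of_lvl {p q : Vt h} (hl : lvl p ≠ lvl q) : p ≠ q := fun hEq => hl (hEq ▸ rfl)

lemma disj_insertB {B W : Finset (Vt h)} (hd : ∀ w ∈ B, w ∉ W) {z : Vt h} (hzW : z ∉ W) :
    ∀ w ∈ insert z B, w ∉ W := by
  intro w hw
  rcases Finset.mem_insert.1 hw with rfl | hw'
  · exact hzW
  · exact hd w hw'

lemma disj_insertW {B W : Finset (Vt h)} (hd : ∀ w ∈ B, w ∉ W) {z : Vt h} (hzB : z ∉ B) :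
    ∀ w ∈ B, w ∉ insert z W := by
  intro w hw hc
  rcases Finset.mem_insert.1 hc with rfl | hc'
  · exact hzB hw
  · exact hd w hw hc'

section StepHelpers

lemma reach_monoN {P Q : ℕ} (hPQ : P ≤ Q) {A B : FConfig (Vt h)}
    (hr : Reach (P : ℝ) A B) : Reach (Q : ℝ) A B :=
  reach_mono (by exact_mod_cast hPQ) hr

lemma reach_addWhiteN (B W : Finset (Vt h)) (z : Vt h)
    (hd : ∀ w ∈ B, w ∉ W) (hzB : z ∉ B) (P : ℕ)
    (hwt : B.card + (insert z W).card ≤ P) :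
    Reach (P : ℝ) (cfg B W) (cfg B (insert z W)) := by
  refine reach_of_move (move_addWhite B W z) hd (disj_insertW hd hzB) ?_ ?_
  · have h1 := Finset.card_le_card (Finset.subset_insert z W)
    exact_mod_cast (by omega : B.card + W.card ≤ P)
  · exact_mod_cast hwt

lemma reach_removeBlackN (B W : Finset (Vt h)) (z : Vt h)
    (hd : ∀ w ∈ B, w ∉ W) (P : ℕ)
    (hwt : B.card + W.card ≤ P) :
    Reach (P : ℝ) (cfg B W) (cfg (B.erase z) W) := by
  refine reach_of_move (move_removeBlack B W z)
    hd (fun w hw => hd w (Finset.mem_of_mem_erase hw)) ?_ ?_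
  · exact_mod_cast hwt
  · have h1 := Finset.card_erase_le (s := B) (a := z)
    exact_mod_cast (by omega : (B.erase z).card + W.card ≤ P)

lemma reach_placeLeafN (B W : Finset (Vt h)) (z : Vt h) (hzleaf : h ≤ lvl z + 1)
    (hd : ∀ w ∈ B, w ∉ W) (hzW : z ∉ W) (P : ℕ)
    (hwt : (insert z B).card + W.card ≤ P) :
    Reach (P : ℝ) (cfg B W) (cfg (insert z B) W) := by
  have hm := move_slide B W z ∅ hd (by simp)
    (fun c hc => absurd hc (leaf_no_child hzleaf))
  rw [Finset.sdiff_empty, Finset.erase_eq_of_notMem hzW] at hm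
  refine reach_of_move hm hd (disj_insertB hd hzW) ?_ ?_
  · have h1 := Finset.card_le_card (Finset.subset_insert z B)
    exact_mod_cast (by omega : B.card + W.card ≤ P)
  · exact_mod_cast hwt

lemma reach_slideN (B W : Finset (Vt h)) (z : Vt h) (K : Finset (Vt h))
    (hKch : ∀ w ∈ K, IsChild 2 h w z)
    (hch : ∀ c, IsChild 2 h c z → (c ∈ B ∨ c ∈ W))
    (hd : ∀ w ∈ B, w ∉ W) (hzW : z ∉ W) (P : ℕ)
    (hwt1 : B.card + W.card ≤ P)
    (hwt2 : B.card + 1 + W.card ≤ P) :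
    Reach (P : ℝ) (cfg B W) (cfg (insert z (B \ K)) (W.erase z)) := by
  refine reach_of_move (move_slide B W z K hd hKch hch) hd ?_ ?_ ?_
  · intro w hw hc
    rcases Finset.mem_insert.1 hw with rfl | hw'
    · exact hzW (Finset.mem_of_mem_erase hc)
    · exact hd w (Finset.mem_sdiff.1 hw').1 (Finset.mem_of_mem_erase hc)
  · exact_mod_cast hwt1
  · have k1 := Finset.card_insert_le z (B \ K)
    have k2 := Finset.card_le_card (Finset.sdiff_subset (s := B) (t := K))
    have k3 := Finset.card_erase_le (s := W) (a := z)
    exact_mod_cast (by omega : (insert z (B \ K)).card + (W.erase z).card ≤ P)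

lemma reach_dischargeN (B W : Finset (Vt h)) (z : Vt h) (K : Finset (Vt h))
    (hKch : ∀ w ∈ K, IsChild 2 h w z)
    (hch : ∀ c, IsChild 2 h c z → (c ∈ B ∨ c ∈ W))
    (hd : ∀ w ∈ B, w ∉ W) (hzB : z ∉ B) (P : ℕ)
    (hwt1 : B.card + W.card ≤ P) :
    Reach (P : ℝ) (cfg B W) (cfg (B \ K) (W.erase z)) := by
  refine reach_of_move (move_discharge B W z K hd hzB hKch hch) hd ?_ ?_ ?_
  · intro w hw hc
    exact hd w (Finset.mem_sdiff.1 hw).1 (Finset.mem_of_mem_erase hc)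
  · exact_mod_cast hwt1
  · have h1 := Finset.card_le_card (Finset.sdiff_subset (s := B) (t := K))
    have h2 := Finset.card_erase_le (s := W) (a := z)
    exact_mod_cast (by omega : (B \ K).card + (W.erase z).card ≤ P)

end StepHelpers

lemma mval_arith (m : ℕ) (hm : 4 ≤ m) :
    Mval (m-1) ≤ Mval m ∧ 1 + Mval (m-2) ≤ Mval m ∧ 4 ≤ Mval m ∧
    1 + Dval (m-2) ≤ Mval m ∧ 1 + Mval (m-2) ≤ Dval m ∧ 4 ≤ Dval m ∧
    1 + Dval (m-2) ≤ Dval m ∧ Dval (m-1) ≤ Dval m := by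
  unfold Mval Dval
  split_ifs <;> omega

theorem MD : ∀ m : ℕ, 1 ≤ m → ∀ u : Vt h, h - lvl u = m →
    ∀ B₀ W₀ : Finset (Vt h), (∀ w ∈ B₀, w ∉ W₀) →
    (∀ w, w ∈ B₀ ∨ w ∈ W₀ → ¬ InSub u w) →
    Reach ((B₀.card + W₀.card + Mval m : ℕ) : ℝ) (cfg B₀ W₀) (cfg (insert u B₀) W₀) ∧
    Reach ((B₀.card + W₀.card + Dval m : ℕ) : ℝ) (cfg B₀ (insert u W₀)) (cfg B₀ W₀) := by
  intro m
  induction m using Nat.strong_induction_on with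
  | _ m IH =>
    intro hm1 u hht B₀ W₀ hd₀ hctx
    have huB₀ : u ∉ B₀ := fun hc => hctx u (Or.inl hc) (insub_refl u)
    have huW₀ : u ∉ W₀ := fun hc => hctx u (Or.inr hc) (insub_refl u)
    have hdW : ∀ w ∈ B₀, w ∉ insert u W₀ := disj_insertW hd₀ huB₀
    rcases Nat.lt_or_ge m 2 with hm2 | hm2
    · -- m = 1 : u is a leaf
      have hm1' : m = 1 := by omega
      subst hm1'
      have hleaf : h ≤ lvl u + 1 := by omega
      have hMv : Mval 1 = 1 := by simp [Mval]
      have hDv : Dval 1 = 1 := by simp [Dval]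
      constructor
      · refine reach_placeLeafN B₀ W₀ u hleaf hd₀ huW₀ _ ?_
        have h1 := Finset.card_insert_le u B₀
        omega
      · have hm := move_discharge B₀ (insert u W₀) u ∅ hdW huB₀ (by simp)
          (fun c hc => absurd hc (leaf_no_child hleaf))
        rw [Finset.sdiff_empty, Finset.erase_insert huW₀] at hm
        refine reach_of_move hm hdW hd₀ ?_ ?_
        · have h1 := Finset.card_insert_le u W₀
          exact_mod_cast (by omega : B₀.card + (insert u W₀).card ≤ B₀.card + W₀.card + Dval 1)
        · exact_mod_cast (by omega : B₀.card + W₀.card ≤ B₀.card + W₀.card + Dval 1)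
    · -- m ≥ 2 : u has two children
      have hlt : lvl u + 1 < h := by have := lvl_lt u; omega
      set c1 := nchild u 0 hlt with hc1def
      set c2 := nchild u 1 hlt with hc2def
      have hcc1 : IsChild 2 h c1 u := nchild_isChild u 0 hlt
      have hcc2 : IsChild 2 h c2 u := nchild_isChild u 1 hlt
      have hc12 : c1 ≠ c2 := nchild_ne u hlt
      have hlc1 : lvl c1 = lvl u + 1 := rfl
      have hlc2 : lvl c2 = lvl u + 1 := rfl
      have hIc1 : InSub u c1 := insub_of_child hcc1
      have hIc2 : InSub u c2 := insub_of_child hcc2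
      have hc1B₀ : c1 ∉ B₀ := fun hc => hctx c1 (Or.inl hc) hIc1
      have hc1W₀ : c1 ∉ W₀ := fun hc => hctx c1 (Or.inr hc) hIc1
      have hc2B₀ : c2 ∉ B₀ := fun hc => hctx c2 (Or.inl hc) hIc2
      have hc2W₀ : c2 ∉ W₀ := fun hc => hctx c2 (Or.inr hc) hIc2
      have huc1 : u ≠ c1 := ne_of_lvl (by omega)
      have huc2 : u ≠ c2 := ne_of_lvl (by omega)
      have hchu : ∀ c, IsChild 2 h c u → c = c1 ∨ c = c2 :=
        fun c hc => child_eq_nchild hc hlt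
      -- contexts for the children
      have hctx1 : ∀ w, w ∈ B₀ ∨ w ∈ W₀ → ¬ InSub c1 w :=
        fun w hw hc => hctx w hw (insub_trans hIc1 hc)
      have hctx2 : ∀ w, w ∈ B₀ ∨ w ∈ W₀ → ¬ InSub c2 w :=
        fun w hw hc => hctx w hw (insub_trans hIc2 hc)
      have hnI12 : ¬ InSub c2 c1 := by
        intro hc
        exact hc12 (eq_of_insub_lvl hc (by omega)).symm
      have hnI21 : ¬ InSub c1 c2 := by
        intro hc
        exact hc12 (eq_of_insub_lvl hc (by omega))
      have hnIu1 : ¬ InSub c1 u := fun hc => by have := insub_lvl hc; omega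
      have hnIu2 : ¬ InSub c2 u := fun hc => by have := insub_lvl hc; omega
      rcases Nat.lt_or_ge m 3 with hm3 | hm3
      · -- m = 2 : both children are leaves
        have hm2' : m = 2 := by omega
        subst hm2'
        have hleaf1 : h ≤ lvl c1 + 1 := by omega
        have hleaf2 : h ≤ lvl c2 + 1 := by omega
        have hMv : Mval 2 = 2 := by simp [Mval]
        have hDv : Dval 2 = 3 := by simp [Dval]
        have hcard1 := Finset.card_insert_le c1 B₀
        have hcard2 := Finset.card_insert_le c2 (insert c1 B₀)
        have hcardu := Finset.card_insert_le u B₀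
        constructor
        · -- M(2)
          set P := B₀.card + W₀.card + Mval 2 with hP
          have r1 : Reach (P : ℝ) (cfg B₀ W₀) (cfg (insert c1 B₀) W₀) :=
            reach_placeLeafN B₀ W₀ c1 hleaf1 hd₀ hc1W₀ P (by omega)
          have r2 : Reach (P : ℝ) (cfg (insert c1 B₀) W₀)
              (cfg (insert c2 (insert c1 B₀)) W₀) :=
            reach_placeLeafN (insert c1 B₀) W₀ c2 hleaf2
              (disj_insertB hd₀ hc1W₀) hc2W₀ P (by omega)
          have r3 : Reach (P : ℝ) (cfg (insert c2 (insert c1 B₀)) W₀)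
              (cfg (insert u B₀) W₀) := by
            have hm := move_slide (insert c2 (insert c1 B₀)) W₀ u {c1, c2}
              (disj_insertB (disj_insertB hd₀ hc1W₀) hc2W₀)
              (by intro w hw
                  rcases Finset.mem_insert.1 hw with rfl | hw'
                  · exact hcc1
                  · rw [Finset.mem_singleton] at hw'; subst hw'; exact hcc2)
              (by intro c hc
                  rcases hchu c hc with rfl | rfl
                  · exact Or.inl (by simp [Finset.mem_insert])
                  · exact Or.inl (by simp [Finset.mem_insert]))
            rw [ins_sdiff_two hc1B₀ hc2B₀, Finset.erase_eq_of_notMem huW₀] at hm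
            refine reach_of_move hm
              (disj_insertB (disj_insertB hd₀ hc1W₀) hc2W₀)
              (disj_insertB hd₀ huW₀) ?_ ?_
            · exact_mod_cast (by omega :
                (insert c2 (insert c1 B₀)).card + W₀.card ≤ P)
            · exact_mod_cast (by omega : (insert u B₀).card + W₀.card ≤ P)
          exact reach_trans r1 (reach_trans r2 r3)
        · -- D(2)
          set P := B₀.card + W₀.card + Dval 2 with hP
          have hdu : ∀ w ∈ B₀, w ∉ insert u W₀ := hdW
          have hcw1 := Finset.card_insert_le u W₀
          have hcw2 := Finset.card_insert_le c1 (insert u W₀)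
          have hcw3 := Finset.card_insert_le c2 (insert c1 (insert u W₀))
          have r1 : Reach (P : ℝ) (cfg B₀ (insert u W₀))
              (cfg B₀ (insert c1 (insert u W₀))) :=
            reach_addWhiteN B₀ (insert u W₀) c1 hdu hc1B₀ P (by omega)
          have r2 : Reach (P : ℝ) (cfg B₀ (insert c1 (insert u W₀)))
              (cfg B₀ (insert c2 (insert c1 (insert u W₀)))) :=
            reach_addWhiteN B₀ (insert c1 (insert u W₀)) c2
              (disj_insertW hdu hc1B₀) hc2B₀ P (by omega)
          have hW3 : ∀ w ∈ B₀, w ∉ insert c2 (insert c1 (insert u W₀)) :=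
            disj_insertW (disj_insertW hdu hc1B₀) hc2B₀
          have r3 : Reach (P : ℝ) (cfg B₀ (insert c2 (insert c1 (insert u W₀))))
              (cfg B₀ (insert c2 (insert c1 W₀))) := by
            have hm := move_discharge B₀ (insert c2 (insert c1 (insert u W₀))) u ∅
              hW3 huB₀ (by simp)
              (by intro c hc
                  rcases hchu c hc with rfl | rfl
                  · exact Or.inr (by simp [Finset.mem_insert])
                  · exact Or.inr (by simp [Finset.mem_insert]))
            rw [Finset.sdiff_empty, erase_ins_deep2 huc2 huc1 huW₀] at hm
            refine reach_of_move hm hW3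
              (disj_insertW (disj_insertW hd₀ hc1B₀) hc2B₀) ?_ ?_
            · exact_mod_cast (by omega :
                B₀.card + (insert c2 (insert c1 (insert u W₀))).card ≤ P)
            · have k1 := Finset.card_insert_le c1 W₀
              have k2 := Finset.card_insert_le c2 (insert c1 W₀)
              exact_mod_cast (by omega :
                B₀.card + (insert c2 (insert c1 W₀)).card ≤ P)
          have r4 : Reach (P : ℝ) (cfg B₀ (insert c2 (insert c1 W₀)))
              (cfg B₀ (insert c2 W₀)) := by
            have hm := move_discharge B₀ (insert c2 (insert c1 W₀)) c1 ∅
              (disj_insertW (disj_insertW hd₀ hc1B₀) hc2B₀) hc1B₀ (by simp)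
              (fun c hc => absurd hc (leaf_no_child hleaf1))
            rw [Finset.sdiff_empty, erase_ins_deep1 hc12 hc1W₀] at hm
            refine reach_of_move hm
              (disj_insertW (disj_insertW hd₀ hc1B₀) hc2B₀)
              (disj_insertW hd₀ hc2B₀) ?_ ?_
            · have k1 := Finset.card_insert_le c1 W₀
              have k2 := Finset.card_insert_le c2 (insert c1 W₀)
              exact_mod_cast (by omega :
                B₀.card + (insert c2 (insert c1 W₀)).card ≤ P)
            · have k1 := Finset.card_insert_le c2 W₀
              exact_mod_cast (by omega : B₀.card + (insert c2 W₀).card ≤ P)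
          have r5 : Reach (P : ℝ) (cfg B₀ (insert c2 W₀)) (cfg B₀ W₀) := by
            have hm := move_discharge B₀ (insert c2 W₀) c2 ∅
              (disj_insertW hd₀ hc2B₀) hc2B₀ (by simp)
              (fun c hc => absurd hc (leaf_no_child hleaf2))
            rw [Finset.sdiff_empty, Finset.erase_insert hc2W₀] at hm
            refine reach_of_move hm (disj_insertW hd₀ hc2B₀) hd₀ ?_ ?_
            · have k1 := Finset.card_insert_le c2 W₀
              exact_mod_cast (by omega : B₀.card + (insert c2 W₀).card ≤ P)
            · exact_mod_cast (by omega : B₀.card + W₀.card ≤ P)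
          exact reach_trans r1 (reach_trans r2 (reach_trans r3 (reach_trans r4 r5)))
      · rcases Nat.lt_or_ge m 4 with hm4 | hm4
        · -- m = 3
          have hm3' : m = 3 := by omega
          subst hm3'
          have hhtc1 : h - lvl c1 = 2 := by omega
          have hhtc2 : h - lvl c2 = 2 := by omega
          have hMv : Mval 3 = 3 := by simp [Mval]
          have hMv2 : Mval 2 = 2 := by simp [Mval]
          have hDv : Dval 3 = 3 := by simp [Dval]
          have hDv2 : Dval 2 = 3 := by simp [Dval]
          have hcard1 := Finset.card_insert_le c1 B₀
          have hcardu := Finset.card_insert_le u B₀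
          have hcarduW := Finset.card_insert_le u W₀
          constructor
          · -- M(3)
            set P := B₀.card + W₀.card + Mval 3 with hP
            have r1 : Reach (P : ℝ) (cfg B₀ W₀) (cfg (insert c1 B₀) W₀) :=
              reach_monoN (by omega)
                (IH 2 (by omega) (by omega) c1 hhtc1 B₀ W₀ hd₀ hctx1).1
            have hctx2' : ∀ w, w ∈ insert c1 B₀ ∨ w ∈ W₀ → ¬ InSub c2 w := by
              intro w hw
              rcases hw with hw | hw
              · rcases Finset.mem_insert.1 hw with rfl | hw'
                · exact hnI12
                · exact hctx2 w (Or.inl hw')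
              · exact hctx2 w (Or.inr hw)
            have r2 : Reach (P : ℝ) (cfg (insert c1 B₀) W₀)
                (cfg (insert c2 (insert c1 B₀)) W₀) :=
              reach_monoN (by omega)
                (IH 2 (by omega) (by omega) c2 hhtc2 (insert c1 B₀) W₀
                  (disj_insertB hd₀ hc1W₀) hctx2').1
            have r3 : Reach (P : ℝ) (cfg (insert c2 (insert c1 B₀)) W₀)
                (cfg (insert u B₀) W₀) := by
              have hm := move_slide (insert c2 (insert c1 B₀)) W₀ u {c1, c2}
                (disj_insertB (disj_insertB hd₀ hc1W₀) hc2W₀)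
                (by intro w hw
                    rcases Finset.mem_insert.1 hw with rfl | hw'
                    · exact hcc1
                    · rw [Finset.mem_singleton] at hw'; subst hw'; exact hcc2)
                (by intro c hc
                    rcases hchu c hc with rfl | rfl
                    · exact Or.inl (by simp [Finset.mem_insert])
                    · exact Or.inl (by simp [Finset.mem_insert]))
              rw [ins_sdiff_two hc1B₀ hc2B₀, Finset.erase_eq_of_notMem huW₀] at hm
              refine reach_of_move hm
                (disj_insertB (disj_insertB hd₀ hc1W₀) hc2W₀)
                (disj_insertB hd₀ huW₀) ?_ ?_
              · have k1 := Finset.card_insert_le c2 (insert c1 B₀)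
                exact_mod_cast (by omega :
                  (insert c2 (insert c1 B₀)).card + W₀.card ≤ P)
              · exact_mod_cast (by omega : (insert u B₀).card + W₀.card ≤ P)
            exact reach_trans r1 (reach_trans r2 r3)
          · -- D(3)
            set P := B₀.card + W₀.card + Dval 3 with hP
            have hctx1' : ∀ w, w ∈ B₀ ∨ w ∈ insert u W₀ → ¬ InSub c1 w := by
              intro w hw
              rcases hw with hw | hw
              · exact hctx1 w (Or.inl hw)
              · rcases Finset.mem_insert.1 hw with rfl | hw'
                · exact hnIu1
                · exact hctx1 w (Or.inr hw')
            have r1 : Reach (P : ℝ) (cfg B₀ (insert u W₀))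
                (cfg (insert c1 B₀) (insert u W₀)) :=
              reach_monoN (by omega)
                (IH 2 (by omega) (by omega) c1 hhtc1 B₀ (insert u W₀) hdW hctx1').1
            have hc1nuW : c1 ∉ insert u W₀ := by
              intro hc
              rcases Finset.mem_insert.1 hc with hEq | hc'
              · exact (ne_of_lvl (show lvl c1 ≠ lvl u by omega)) hEq
              · exact hc1W₀ hc'
            have hd1 : ∀ w ∈ insert c1 B₀, w ∉ insert u W₀ := disj_insertB hdW hc1nuW
            have hc2nB : c2 ∉ insert c1 B₀ := by
              intro hc
              rcases Finset.mem_insert.1 hc with hEq | hc'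
              · exact hc12 hEq.symm
              · exact hc2B₀ hc'
            have r2 : Reach (P : ℝ) (cfg (insert c1 B₀) (insert u W₀))
                (cfg (insert c1 B₀) (insert c2 (insert u W₀))) := by
              refine reach_addWhiteN (insert c1 B₀) (insert u W₀) c2 hd1 hc2nB P ?_
              have k1 := Finset.card_insert_le c2 (insert u W₀)
              omega
            have hd2 : ∀ w ∈ insert c1 B₀, w ∉ insert c2 (insert u W₀) :=
              disj_insertW hd1 hc2nB
            have r3 : Reach (P : ℝ) (cfg (insert c1 B₀) (insert c2 (insert u W₀)))
                (cfg (insert c1 B₀) (insert c2 W₀)) := by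
              have hunB : u ∉ insert c1 B₀ := by
                intro hc
                rcases Finset.mem_insert.1 hc with hEq | hc'
                · exact huc1 hEq
                · exact huB₀ hc'
              have hm := move_discharge (insert c1 B₀) (insert c2 (insert u W₀)) u ∅
                hd2 hunB (by simp)
                (by intro c hc
                    rcases hchu c hc with rfl | rfl
                    · exact Or.inl (Finset.mem_insert_self _ _)
                    · exact Or.inr (Finset.mem_insert_self _ _))
              rw [Finset.sdiff_empty, erase_ins_deep1 huc2 huW₀] at hm
              refine reach_of_move hm hd2 (disj_insertB (disj_insertW hd₀ hc2B₀) (by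
                intro hc
                rcases Finset.mem_insert.1 hc with hEq | hc'
                · exact hc12 hEq
                · exact hc1W₀ hc')) ?_ ?_
              · have k1 := Finset.card_insert_le c2 (insert u W₀)
                exact_mod_cast (by omega :
                  (insert c1 B₀).card + (insert c2 (insert u W₀)).card ≤ P)
              · have k1 := Finset.card_insert_le c2 W₀
                exact_mod_cast (by omega :
                  (insert c1 B₀).card + (insert c2 W₀).card ≤ P)
            have r4 : Reach (P : ℝ) (cfg (insert c1 B₀) (insert c2 W₀))
                (cfg B₀ (insert c2 W₀)) := by
              have hr := reach_removeBlackN (insert c1 B₀) (insert c2 W₀) c1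
                (disj_insertB (disj_insertW hd₀ hc2B₀) (by
                  intro hc
                  rcases Finset.mem_insert.1 hc with hEq | hc'
                  · exact hc12 hEq
                  · exact hc1W₀ hc')) P (by
                  have k1 := Finset.card_insert_le c2 W₀
                  omega)
              rwa [Finset.erase_insert hc1B₀] at hr
            have r5 : Reach (P : ℝ) (cfg B₀ (insert c2 W₀)) (cfg B₀ W₀) :=
              reach_monoN (by omega)
                (IH 2 (by omega) (by omega) c2 hhtc2 B₀ W₀ hd₀ hctx2).2
            exact reach_trans r1 (reach_trans r2 (reach_trans r3 (reach_trans r4 r5)))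
        · -- m ≥ 4
          obtain ⟨ar1, ar2, ar3, ar4, ar5, ar6, ar7, ar8⟩ := mval_arith m hm4
          have hhtc1 : h - lvl c1 = m - 1 := by omega
          have hhtc2 : h - lvl c2 = m - 1 := by omega
          have hltc1 : lvl c1 + 1 < h := by omega
          have hltc2 : lvl c2 + 1 < h := by omega
          constructor
          · -- M(m), m ≥ 4
            set P := B₀.card + W₀.card + Mval m with hP
            set b1 := nchild c2 0 hltc2 with hb1def
            set b2 := nchild c2 1 hltc2 with hb2def
            have hcb1 : IsChild 2 h b1 c2 := nchild_isChild c2 0 hltc2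
            have hcb2 : IsChild 2 h b2 c2 := nchild_isChild c2 1 hltc2
            have hb12 : b1 ≠ b2 := nchild_ne c2 hltc2
            have hlb1 : lvl b1 = lvl u + 2 := rfl
            have hlb2 : lvl b2 = lvl u + 2 := rfl
            have hIb1 : InSub u b1 := insub_trans hIc2 (insub_of_child hcb1)
            have hIb2 : InSub u b2 := insub_trans hIc2 (insub_of_child hcb2)
            have hb1B₀ : b1 ∉ B₀ := fun hc => hctx b1 (Or.inl hc) hIb1
            have hb1W₀ : b1 ∉ W₀ := fun hc => hctx b1 (Or.inr hc) hIb1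
            have hb2B₀ : b2 ∉ B₀ := fun hc => hctx b2 (Or.inl hc) hIb2
            have hb2W₀ : b2 ∉ W₀ := fun hc => hctx b2 (Or.inr hc) hIb2
            have hhtb1 : h - lvl b1 = m - 2 := by omega
            have hhtb2 : h - lvl b2 = m - 2 := by omega
            -- step 1 : black pebble on c1
            have r1 : Reach (P : ℝ) (cfg B₀ W₀) (cfg (insert c1 B₀) W₀) :=
              reach_monoN (by omega)
                (IH (m-1) (by omega) (by omega) c1 hhtc1 B₀ W₀ hd₀ hctx1).1
            -- step 2 : black pebble on b1
            have hctxb1 : ∀ w, w ∈ insert c1 B₀ ∨ w ∈ W₀ → ¬ InSub b1 w := by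
              intro w hw hI
              rcases hw with hw | hw
              · rcases Finset.mem_insert.1 hw with rfl | hw'
                · have := insub_lvl hI; omega
                · exact hctx w (Or.inl hw') (insub_trans hIb1 hI)
              · exact hctx w (Or.inr hw) (insub_trans hIb1 hI)
            have r2 : Reach (P : ℝ) (cfg (insert c1 B₀) W₀)
                (cfg (insert b1 (insert c1 B₀)) W₀) := by
              refine reach_monoN ?_
                (IH (m-2) (by omega) (by omega) b1 hhtb1 (insert c1 B₀) W₀
                  (disj_insertB hd₀ hc1W₀) hctxb1).1
              have k1 := Finset.card_insert_le c1 B₀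
              omega
            -- step 3 : white pebble on b2
            have hb2nB : b2 ∉ insert b1 (insert c1 B₀) := by
              intro hc
              rcases Finset.mem_insert.1 hc with hEq | hc'
              · exact hb12 hEq.symm
              · rcases Finset.mem_insert.1 hc' with hEq | hc''
                · exact (ne_of_lvl (show lvl b2 ≠ lvl c1 by omega)) hEq
                · exact hb2B₀ hc''
            have hdB2 : ∀ w ∈ insert b1 (insert c1 B₀), w ∉ W₀ :=
              disj_insertB (disj_insertB hd₀ hc1W₀) hb1W₀
            have r3 : Reach (P : ℝ) (cfg (insert b1 (insert c1 B₀)) W₀)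
                (cfg (insert b1 (insert c1 B₀)) (insert b2 W₀)) := by
              refine reach_addWhiteN _ _ b2 hdB2 hb2nB P ?_
              have k1 := Finset.card_insert_le c1 B₀
              have k2 := Finset.card_insert_le b1 (insert c1 B₀)
              have k3 := Finset.card_insert_le b2 W₀
              omega
            -- step 4 : slide black onto c2,消 b1
            have hc1nbw : c1 ∉ insert b2 W₀ := by
              intro hc
              rcases Finset.mem_insert.1 hc with hEq | hc'
              · exact (ne_of_lvl (show lvl c1 ≠ lvl b2 by omega)) hEq
              · exact hc1W₀ hc'
            have hb1nbw : b1 ∉ insert b2 W₀ := by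
              intro hc
              rcases Finset.mem_insert.1 hc with hEq | hc'
              · exact hb12 hEq
              · exact hb1W₀ hc'
            have hc2nbw : c2 ∉ insert b2 W₀ := by
              intro hc
              rcases Finset.mem_insert.1 hc with hEq | hc'
              · exact (ne_of_lvl (show lvl c2 ≠ lvl b2 by omega)) hEq
              · exact hc2W₀ hc'
            have hunbw : u ∉ insert b2 W₀ := by
              intro hc
              rcases Finset.mem_insert.1 hc with hEq | hc'
              · exact (ne_of_lvl (show lvl u ≠ lvl b2 by omega)) hEq
              · exact huW₀ hc'
            have hd4 : ∀ w ∈ insert b1 (insert c1 B₀), w ∉ insert b2 W₀ :=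
              disj_insertB (disj_insertB (disj_insertW hd₀ hb2B₀) hc1nbw) hb1nbw
            have hb1nicB : b1 ∉ insert c1 B₀ := by
              intro hc
              rcases Finset.mem_insert.1 hc with hEq | hc'
              · exact (ne_of_lvl (show lvl b1 ≠ lvl c1 by omega)) hEq
              · exact hb1B₀ hc'
            have r4 : Reach (P : ℝ) (cfg (insert b1 (insert c1 B₀)) (insert b2 W₀))
                (cfg (insert c2 (insert c1 B₀)) (insert b2 W₀)) := by
              have hr := reach_slideN (insert b1 (insert c1 B₀)) (insert b2 W₀) c2 {b1}
                (by intro w hw; rw [Finset.mem_singleton] at hw; subst hw; exact hcb1)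
                (by intro c hc
                    rcases child_eq_nchild hc hltc2 with rfl | rfl
                    · exact Or.inl (Finset.mem_insert_self _ _)
                    · exact Or.inr (Finset.mem_insert_self _ _))
                hd4 hc2nbw P
                (by have k1 := Finset.card_insert_le c1 B₀
                    have k2 := Finset.card_insert_le b1 (insert c1 B₀)
                    have k3 := Finset.card_insert_le b2 W₀
                    omega)
                (by have k1 := Finset.card_insert_le c1 B₀
                    have k2 := Finset.card_insert_le b1 (insert c1 B₀)
                    have k3 := Finset.card_insert_le b2 W₀
                    omega)
              rwa [ins_sdiff_one hb1nicB, Finset.erase_eq_of_notMem hc2nbw] at hr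
            -- step 5 : slide black onto u
            have hd5 : ∀ w ∈ insert c2 (insert c1 B₀), w ∉ insert b2 W₀ :=
              disj_insertB (disj_insertB (disj_insertW hd₀ hb2B₀) hc1nbw) hc2nbw
            have r5 : Reach (P : ℝ) (cfg (insert c2 (insert c1 B₀)) (insert b2 W₀))
                (cfg (insert u B₀) (insert b2 W₀)) := by
              have hr := reach_slideN (insert c2 (insert c1 B₀)) (insert b2 W₀) u {c1, c2}
                (by intro w hw
                    rcases Finset.mem_insert.1 hw with rfl | hw'
                    · exact hcc1
                    · rw [Finset.mem_singleton] at hw'; subst hw'; exact hcc2)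
                (by intro c hc
                    rcases hchu c hc with rfl | rfl
                    · exact Or.inl (Finset.mem_insert_of_mem (Finset.mem_insert_self _ _))
                    · exact Or.inl (Finset.mem_insert_self _ _))
                hd5 hunbw P
                (by have k1 := Finset.card_insert_le c1 B₀
                    have k2 := Finset.card_insert_le c2 (insert c1 B₀)
                    have k3 := Finset.card_insert_le b2 W₀
                    omega)
                (by have k3 := Finset.card_insert_le c1 B₀
                    have k4 := Finset.card_insert_le c2 (insert c1 B₀)
                    have k5 := Finset.card_insert_le b2 W₀
                    omega)
              rwa [ins_sdiff_two hc1B₀ hc2B₀, Finset.erase_eq_of_notMem hunbw] at hr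
            -- step 6 : discharge the white pebble on b2
            have hctxb2 : ∀ w, w ∈ insert u B₀ ∨ w ∈ W₀ → ¬ InSub b2 w := by
              intro w hw hI
              rcases hw with hw | hw
              · rcases Finset.mem_insert.1 hw with rfl | hw'
                · have := insub_lvl hI; omega
                · exact hctx w (Or.inl hw') (insub_trans hIb2 hI)
              · exact hctx w (Or.inr hw) (insub_trans hIb2 hI)
            have r6 : Reach (P : ℝ) (cfg (insert u B₀) (insert b2 W₀))
                (cfg (insert u B₀) W₀) := by
              refine reach_monoN ?_
                (IH (m-2) (by omega) (by omega) b2 hhtb2 (insert u B₀) W₀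
                  (disj_insertB hd₀ huW₀) hctxb2).2
              have k1 := Finset.card_insert_le u B₀
              omega
            exact reach_trans r1 (reach_trans r2 (reach_trans r3
              (reach_trans r4 (reach_trans r5 r6))))
          · -- D(m), m ≥ 4
            set P := B₀.card + W₀.card + Dval m with hP
            set v11 := nchild c1 0 hltc1 with hv11def
            set v12 := nchild c1 1 hltc1 with hv12def
            have hcv11 : IsChild 2 h v11 c1 := nchild_isChild c1 0 hltc1
            have hcv12 : IsChild 2 h v12 c1 := nchild_isChild c1 1 hltc1
            have hv1112 : v11 ≠ v12 := nchild_ne c1 hltc1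
            have hlv11 : lvl v11 = lvl u + 2 := rfl
            have hlv12 : lvl v12 = lvl u + 2 := rfl
            have hIv11 : InSub u v11 := insub_trans hIc1 (insub_of_child hcv11)
            have hIv12 : InSub u v12 := insub_trans hIc1 (insub_of_child hcv12)
            have hv11B₀ : v11 ∉ B₀ := fun hc => hctx v11 (Or.inl hc) hIv11
            have hv11W₀ : v11 ∉ W₀ := fun hc => hctx v11 (Or.inr hc) hIv11
            have hv12B₀ : v12 ∉ B₀ := fun hc => hctx v12 (Or.inl hc) hIv12
            have hv12W₀ : v12 ∉ W₀ := fun hc => hctx v12 (Or.inr hc) hIv12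
            have hhtv11 : h - lvl v11 = m - 2 := by omega
            have hhtv12 : h - lvl v12 = m - 2 := by omega
            -- step 1 : black pebble on v11
            have hctxv11 : ∀ w, w ∈ B₀ ∨ w ∈ insert u W₀ → ¬ InSub v11 w := by
              intro w hw hI
              rcases hw with hw | hw
              · exact hctx w (Or.inl hw) (insub_trans hIv11 hI)
              · rcases Finset.mem_insert.1 hw with rfl | hw'
                · have := insub_lvl hI; omega
                · exact hctx w (Or.inr hw') (insub_trans hIv11 hI)
            have r1 : Reach (P : ℝ) (cfg B₀ (insert u W₀))
                (cfg (insert v11 B₀) (insert u W₀)) := by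
              refine reach_monoN ?_
                (IH (m-2) (by omega) (by omega) v11 hhtv11 B₀ (insert u W₀)
                  hdW hctxv11).1
              have k1 := Finset.card_insert_le u W₀
              omega
            -- step 2 : white pebble on v12
            have hv11nuW : v11 ∉ insert u W₀ := by
              intro hc
              rcases Finset.mem_insert.1 hc with hEq | hc'
              · exact (ne_of_lvl (show lvl v11 ≠ lvl u by omega)) hEq
              · exact hv11W₀ hc'
            have hd1 : ∀ w ∈ insert v11 B₀, w ∉ insert u W₀ := disj_insertB hdW hv11nuW
            have hv12nB : v12 ∉ insert v11 B₀ := by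
              intro hc
              rcases Finset.mem_insert.1 hc with hEq | hc'
              · exact hv1112 hEq.symm
              · exact hv12B₀ hc'
            have r2 : Reach (P : ℝ) (cfg (insert v11 B₀) (insert u W₀))
                (cfg (insert v11 B₀) (insert v12 (insert u W₀))) := by
              refine reach_addWhiteN _ _ v12 hd1 hv12nB P ?_
              have k1 := Finset.card_insert_le v11 B₀
              have k2 := Finset.card_insert_le u W₀
              have k3 := Finset.card_insert_le v12 (insert u W₀)
              omega
            -- step 3 : slide black onto c1
            have hd2 : ∀ w ∈ insert v11 B₀, w ∉ insert v12 (insert u W₀) :=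
              disj_insertW hd1 hv12nB
            have hc1nW : c1 ∉ insert v12 (insert u W₀) := by
              intro hc
              rcases Finset.mem_insert.1 hc with hEq | hc'
              · exact (ne_of_lvl (show lvl c1 ≠ lvl v12 by omega)) hEq
              · rcases Finset.mem_insert.1 hc' with hEq | hc''
                · exact (ne_of_lvl (show lvl c1 ≠ lvl u by omega)) hEq
                · exact hc1W₀ hc''
            have r3 : Reach (P : ℝ)
                (cfg (insert v11 B₀) (insert v12 (insert u W₀)))
                (cfg (insert c1 B₀) (insert v12 (insert u W₀))) := by
              have hr := reach_slideN (insert v11 B₀) (insert v12 (insert u W₀)) c1 {v11}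
                (by intro w hw; rw [Finset.mem_singleton] at hw; subst hw; exact hcv11)
                (by intro c hc
                    rcases child_eq_nchild hc hltc1 with rfl | rfl
                    · exact Or.inl (Finset.mem_insert_self _ _)
                    · exact Or.inr (Finset.mem_insert_self _ _))
                hd2 hc1nW P
                (by have k1 := Finset.card_insert_le v11 B₀
                    have k2 := Finset.card_insert_le u W₀
                    have k3 := Finset.card_insert_le v12 (insert u W₀)
                    omega)
                (by have k3 := Finset.card_insert_le v11 B₀
                    have k4 := Finset.card_insert_le u W₀
                    have k5 := Finset.card_insert_le v12 (insert u W₀)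
                    omega)
              rwa [ins_sdiff_one hv11B₀, Finset.erase_eq_of_notMem hc1nW] at hr
            -- step 4 : white pebble on c2
            have hd3 : ∀ w ∈ insert c1 B₀, w ∉ insert v12 (insert u W₀) :=
              disj_insertB (disj_insertW hdW hv12B₀) hc1nW
            have hc2nicB : c2 ∉ insert c1 B₀ := by
              intro hc
              rcases Finset.mem_insert.1 hc with hEq | hc'
              · exact hc12 hEq.symm
              · exact hc2B₀ hc'
            have r4 : Reach (P : ℝ)
                (cfg (insert c1 B₀) (insert v12 (insert u W₀)))
                (cfg (insert c1 B₀) (insert c2 (insert v12 (insert u W₀)))) := by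
              refine reach_addWhiteN _ _ c2 hd3 hc2nicB P ?_
              have k1 := Finset.card_insert_le c1 B₀
              have k2 := Finset.card_insert_le u W₀
              have k3 := Finset.card_insert_le v12 (insert u W₀)
              have k4 := Finset.card_insert_le c2 (insert v12 (insert u W₀))
              omega
            -- step 5 : discharge the white pebble on u
            have hd4 : ∀ w ∈ insert c1 B₀, w ∉ insert c2 (insert v12 (insert u W₀)) :=
              disj_insertW hd3 hc2nicB
            have hunicB : u ∉ insert c1 B₀ := by
              intro hc
              rcases Finset.mem_insert.1 hc with hEq | hc'
              · exact huc1 hEq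
              · exact huB₀ hc'
            have r5 : Reach (P : ℝ)
                (cfg (insert c1 B₀) (insert c2 (insert v12 (insert u W₀))))
                (cfg (insert c1 B₀) (insert c2 (insert v12 W₀))) := by
              have hm := move_discharge (insert c1 B₀)
                (insert c2 (insert v12 (insert u W₀))) u ∅ hd4 hunicB (by simp)
                (by intro c hc
                    rcases hchu c hc with rfl | rfl
                    · exact Or.inl (Finset.mem_insert_self _ _)
                    · exact Or.inr (Finset.mem_insert_self _ _))
              rw [Finset.sdiff_empty,
                erase_ins_deep2 huc2 (ne_of_lvl (show lvl u ≠ lvl v12 by omega)) huW₀] at hm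
              refine reach_of_move hm hd4 ?_ ?_ ?_
              · refine disj_insertB (disj_insertW (disj_insertW hd₀ hv12B₀) hc2B₀) ?_
                intro hc
                rcases Finset.mem_insert.1 hc with hEq | hc'
                · exact hc12 hEq
                · rcases Finset.mem_insert.1 hc' with hEq | hc''
                  · exact (ne_of_lvl (show lvl c1 ≠ lvl v12 by omega)) hEq
                  · exact hc1W₀ hc''
              · have k1 := Finset.card_insert_le c1 B₀
                have k2 := Finset.card_insert_le u W₀
                have k3 := Finset.card_insert_le v12 (insert u W₀)
                have k4 := Finset.card_insert_le c2 (insert v12 (insert u W₀))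
                exact_mod_cast (by omega : (insert c1 B₀).card +
                  (insert c2 (insert v12 (insert u W₀))).card ≤ P)
              · have k1 := Finset.card_insert_le c1 B₀
                have k2 := Finset.card_insert_le v12 W₀
                have k3 := Finset.card_insert_le c2 (insert v12 W₀)
                exact_mod_cast (by omega : (insert c1 B₀).card +
                  (insert c2 (insert v12 W₀)).card ≤ P)
            -- step 6 : remove the black pebble from c1
            have r6 : Reach (P : ℝ)
                (cfg (insert c1 B₀) (insert c2 (insert v12 W₀)))
                (cfg B₀ (insert c2 (insert v12 W₀))) := by
              have hr := reach_removeBlackN (insert c1 B₀) (insert c2 (insert v12 W₀)) c1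
                (by refine disj_insertB (disj_insertW (disj_insertW hd₀ hv12B₀) hc2B₀) ?_
                    intro hc
                    rcases Finset.mem_insert.1 hc with hEq | hc'
                    · exact hc12 hEq
                    · rcases Finset.mem_insert.1 hc' with hEq | hc''
                      · exact (ne_of_lvl (show lvl c1 ≠ lvl v12 by omega)) hEq
                      · exact hc1W₀ hc'') P
                (by have k1 := Finset.card_insert_le c1 B₀
                    have k2 := Finset.card_insert_le v12 W₀
                    have k3 := Finset.card_insert_le c2 (insert v12 W₀)
                    omega)
              rwa [Finset.erase_insert hc1B₀] at hr
            -- step 7 : discharge the white pebble on v12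
            have hctxv12 : ∀ w, w ∈ B₀ ∨ w ∈ insert c2 W₀ → ¬ InSub v12 w := by
              intro w hw hI
              rcases hw with hw | hw
              · exact hctx w (Or.inl hw) (insub_trans hIv12 hI)
              · rcases Finset.mem_insert.1 hw with rfl | hw'
                · have := insub_lvl hI; omega
                · exact hctx w (Or.inr hw') (insub_trans hIv12 hI)
            have r7 : Reach (P : ℝ) (cfg B₀ (insert c2 (insert v12 W₀)))
                (cfg B₀ (insert c2 W₀)) := by
              have hr := (IH (m-2) (by omega) (by omega) v12 hhtv12 B₀ (insert c2 W₀)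
                (disj_insertW hd₀ hc2B₀) hctxv12).2
              rw [ins_comm v12 c2 W₀] at hr
              refine reach_monoN ?_ hr
              have k1 := Finset.card_insert_le c2 W₀
              omega
            -- step 8 : discharge the white pebble on c2
            have r8 : Reach (P : ℝ) (cfg B₀ (insert c2 W₀)) (cfg B₀ W₀) :=
              reach_monoN (by omega)
                (IH (m-1) (by omega) (by omega) c2 hhtc2 B₀ W₀ hd₀ hctx2).2
            exact reach_trans r1 (reach_trans r2 (reach_trans r3 (reach_trans r4
              (reach_trans r5 (reach_trans r6 (reach_trans r7 r8))))))

end BWProof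

namespace BWProof

variable {h : ℕ}

lemma pebCount_le_weight {A : FConfig (Vt h)} (hv : A.Valid) (hw : A.Whole)
    (S : Finset (Vt h)) : (pebCount A S : ℝ) ≤ A.weight := by
  unfold pebCount FConfig.weight
  have h1 : ∀ u ∈ S.filter (fun u => Peb A u), (1:ℝ) ≤ A.b u + A.w u := by
    intro u hu
    have hp := (Finset.mem_filter.1 hu).2
    rcases peb_b_or_w hw hp with hb | hbw
    · have := (hv u).2.1; linarith
    · have := (hv u).1; linarith
  calc ((S.filter (fun u => Peb A u)).card : ℝ)
      = ∑ _u ∈ S.filter (fun u => Peb A u), (1:ℝ) := by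
        rw [Finset.sum_const, nsmul_eq_mul, mul_one]
    _ ≤ ∑ u ∈ S.filter (fun u => Peb A u), (A.b u + A.w u) := Finset.sum_le_sum h1
    _ ≤ ∑ u, (A.b u + A.w u) :=
        Finset.sum_le_sum_of_subset_of_nonneg (Finset.subset_univ _)
          (fun u _ _ => by have := (hv u).1; have := (hv u).2.1; linarith)

lemma pebbling_of_reach {hp : 0 < h} {p : ℝ} {mid : FConfig (Vt h)}
    (r1 : Reach p (FConfig.zero (Vt h)) mid)
    (r2 : Reach p mid (FConfig.zero (Vt h)))
    (hgoal : mid.b (troot 2 h hp) = 1) :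
    BWPebbles 2 h hp p := by
  obtain ⟨N₁, c₁, h10, h11, h12, h13⟩ := r1
  obtain ⟨N₂, c₂, h20, h21, h22, h23⟩ := r2
  refine ⟨N₁ + N₂, fun i => if i < N₁ then c₁ i else c₂ (i - N₁),
    ?_, ?_, ?_, ?_, ?_, ?_, ?_⟩
  · show (if 0 < N₁ then c₁ 0 else c₂ (0 - N₁)) = FConfig.zero (Vt h)
    by_cases hN : 0 < N₁
    · rw [if_pos hN]; exact h10
    · rw [if_neg hN]
      have hN0 : N₁ = 0 := by omega
      rw [Nat.zero_sub, h20, ← h11, hN0]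
      exact h10
  · show (if N₁ + N₂ < N₁ then c₁ (N₁+N₂) else c₂ (N₁ + N₂ - N₁)) = FConfig.zero (Vt h)
    rw [if_neg (by omega), Nat.add_sub_cancel_left]
    exact h21
  · intro i hi
    dsimp only
    by_cases hiN : i < N₁
    · rw [if_pos hiN]; exact (h12 i (by omega)).1
    · rw [if_neg hiN]; exact (h22 (i - N₁) (by omega)).1
  · intro i hi
    dsimp only
    by_cases hiN : i < N₁
    · rw [if_pos hiN]; exact (h12 i (by omega)).2.1
    · rw [if_neg hiN]; exact (h22 (i - N₁) (by omega)).2.1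
  · intro i hi
    dsimp only
    by_cases hiN : i + 1 < N₁
    · rw [if_pos (by omega), if_pos hiN]
      exact h13 i (by omega)
    · by_cases hiN' : i < N₁
      · rw [if_pos hiN', if_neg hiN]
        have hEq : i + 1 = N₁ := by omega
        have hcc : c₂ (i + 1 - N₁) = c₁ (i+1) := by
          rw [hEq, Nat.sub_self, h20, ← h11]
        rw [hcc]
        exact h13 i (by omega)
      · rw [if_neg hiN', if_neg hiN]
        have hEq : i + 1 - N₁ = (i - N₁) + 1 := by omega
        rw [hEq]
        exact h23 (i - N₁) (by omega)
  · refine ⟨N₁, by omega, ?_⟩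
    show (if N₁ < N₁ then c₁ N₁ else c₂ (N₁ - N₁)).b (troot 2 h hp) = 1
    rw [if_neg (by omega), Nat.sub_self, h20]
    exact hgoal
  · intro i hi
    dsimp only
    by_cases hiN : i < N₁
    · rw [if_pos hiN]; exact (h12 i (by omega)).2.2
    · rw [if_neg hiN]; exact (h22 (i - N₁) (by omega)).2.2

lemma upper_bound (hh : 2 ≤ h) :
    BWPebbles 2 h (lt_of_lt_of_le two_pos hh) (((h + 1) / 2 + 1 : ℕ) : ℝ) := by
  have hp : 0 < h := by omega
  set rt : Vt h := troot 2 h hp with hrtdef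
  have hlrt : lvl rt = 0 := rfl
  have hltr : lvl rt + 1 < h := by omega
  set x := nchild rt 0 hltr with hxdef
  set y := nchild rt 1 hltr with hydef
  have hcx : IsChild 2 h x rt := nchild_isChild rt 0 hltr
  have hcy : IsChild 2 h y rt := nchild_isChild rt 1 hltr
  have hxy : x ≠ y := nchild_ne rt hltr
  have hlx : lvl x = 1 := rfl
  have hly : lvl y = 1 := rfl
  have hhtx : h - lvl x = h - 1 := by omega
  have hhty : h - lvl y = h - 1 := by omega
  have hrx : rt ≠ x := ne_of_lvl (by omega)
  have hry : rt ≠ y := ne_of_lvl (by omega)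
  have ha1 : Mval (h-1) ≤ (h+1)/2 + 1 := by unfold Mval; split_ifs <;> omega
  have ha2 : Dval (h-1) ≤ (h+1)/2 + 1 := by unfold Dval; split_ifs <;> omega
  have ha3 : 2 ≤ (h+1)/2 + 1 := by omega
  have hd0 : ∀ w ∈ (∅ : Finset (Vt h)), w ∉ (∅ : Finset (Vt h)) := by simp
  have hctx0 : ∀ (z : Vt h) (w : Vt h),
      w ∈ (∅ : Finset (Vt h)) ∨ w ∈ (∅ : Finset (Vt h)) → ¬ InSub z w := by
    intro z w hw
    simp at hw
  have hdxy : ∀ w ∈ ({x} : Finset (Vt h)), w ∉ ({y} : Finset (Vt h)) := by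
    intro w hw hc
    rw [Finset.mem_singleton] at hw hc
    exact hxy (hw ▸ hc ▸ rfl)
  -- step 1 : black pebble on x
  have r1 : Reach (((h+1)/2 + 1 : ℕ) : ℝ) (cfg ∅ ∅) (cfg {x} ∅) := by
    have hr := (MD (h-1) (by omega) x hhtx ∅ ∅ hd0 (hctx0 x)).1
    simp only [Finset.card_empty] at hr
    exact reach_monoN (by omega) hr
  -- step 2 : white pebble on y
  have r2 : Reach (((h+1)/2 + 1 : ℕ) : ℝ) (cfg {x} ∅) (cfg {x} {y}) := by
    refine reach_addWhiteN {x} ∅ y (by simp)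
      (by rw [Finset.mem_singleton]; exact Ne.symm hxy) _ ?_
    have k1 : ({x} : Finset (Vt h)).card = 1 := Finset.card_singleton x
    have k2 : (insert y (∅ : Finset (Vt h))).card = 1 := rfl
    omega
  -- step 3 : slide black onto the root
  have r3 : Reach (((h+1)/2 + 1 : ℕ) : ℝ) (cfg {x} {y}) (cfg {rt} {y}) := by
    have hm := move_slide {x} {y} rt {x} hdxy
      (by intro w hw; rw [Finset.mem_singleton] at hw; subst hw; exact hcx)
      (by intro c hc
          rcases child_eq_nchild hc hltr with rfl | rfl
          · exact Or.inl (Finset.mem_singleton_self _)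
          · exact Or.inr (Finset.mem_singleton_self _))
    have hs1 : (({x} : Finset (Vt h)) \ {x}) = ∅ := by simp
    have hs2 : (({y} : Finset (Vt h)).erase rt) = {y} :=
      Finset.erase_eq_of_notMem (by rw [Finset.mem_singleton]; exact hry)
    rw [hs1, hs2] at hm
    have hs3 : insert rt (∅ : Finset (Vt h)) = {rt} := rfl
    rw [hs3] at hm
    refine reach_of_move hm hdxy
      (by intro w hw hc
          rw [Finset.mem_singleton] at hw hc
          exact hry (hw ▸ hc ▸ rfl)) ?_ ?_
    · have k1 : ({x} : Finset (Vt h)).card = 1 := Finset.card_singleton x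
      have k2 : ({y} : Finset (Vt h)).card = 1 := Finset.card_singleton y
      exact_mod_cast (by omega : ({x} : Finset (Vt h)).card +
        ({y} : Finset (Vt h)).card ≤ (h+1)/2 + 1)
    · have k1 : ({rt} : Finset (Vt h)).card = 1 := Finset.card_singleton rt
      have k2 : ({y} : Finset (Vt h)).card = 1 := Finset.card_singleton y
      exact_mod_cast (by omega : ({rt} : Finset (Vt h)).card +
        ({y} : Finset (Vt h)).card ≤ (h+1)/2 + 1)
  -- step 4 : remove the black pebble from the root
  have r4 : Reach (((h+1)/2 + 1 : ℕ) : ℝ) (cfg {rt} {y}) (cfg ∅ {y}) := by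
    have hr := reach_removeBlackN {rt} {y} rt
      (by intro w hw hc
          rw [Finset.mem_singleton] at hw hc
          exact hry (hw ▸ hc ▸ rfl)) ((h+1)/2 + 1)
      (by have k1 : ({rt} : Finset (Vt h)).card = 1 := Finset.card_singleton rt
          have k2 : ({y} : Finset (Vt h)).card = 1 := Finset.card_singleton y
          omega)
    have hs : ({rt} : Finset (Vt h)).erase rt = ∅ := by simp
    rwa [hs] at hr
  -- step 5 : discharge the white pebble on y
  have r5 : Reach (((h+1)/2 + 1 : ℕ) : ℝ) (cfg ∅ {y}) (cfg ∅ ∅) := by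
    have hr := (MD (h-1) (by omega) y hhty ∅ ∅ hd0 (hctx0 y)).2
    simp only [Finset.card_empty] at hr
    have hs : insert y (∅ : Finset (Vt h)) = {y} := rfl
    rw [hs] at hr
    exact reach_monoN (by omega) hr
  have hzero : cfg (∅ : Finset (Vt h)) ∅ = FConfig.zero (Vt h) := cfg_empty
  have R1 : Reach (((h+1)/2 + 1 : ℕ) : ℝ) (FConfig.zero (Vt h)) (cfg {rt} {y}) := by
    rw [← hzero]
    exact reach_trans r1 (reach_trans r2 r3)
  have R2 : Reach (((h+1)/2 + 1 : ℕ) : ℝ) (cfg {rt} {y}) (FConfig.zero (Vt h)) := by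
    rw [← hzero]
    exact reach_trans r4 r5
  exact pebbling_of_reach R1 R2 (by rw [cfg_b, if_pos (Finset.mem_singleton_self _)])

lemma lower_bound (hh : 2 ≤ h) (p : ℝ)
    (hbw : BWPebbles 2 h (lt_of_lt_of_le two_pos hh) p) : (((h + 1) / 2 + 1 : ℕ) : ℝ) ≤ p := by
  obtain ⟨n, C, h0, hn, hval, hwhl, hmov, ⟨t₀, ht₀, hroot⟩, hwt⟩ := hbw
  have hp : 0 < h := by omega
  set rt : Vt h := troot 2 h hp with hrtdef
  have hb0 : (C 0).b rt = 0 := by rw [h0]; rfl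
  have hroot' : (C t₀).b rt = 1 := hroot
  obtain ⟨τ, hτ0, hττ, hcrit, _⟩ := traceB C n hmov hwhl rt 0 t₀ (by omega) ht₀ hb0 hroot'
  have hht : h - lvl rt = h := by
    have : lvl rt = 0 := rfl
    omega
  have hclaim := claimAll C n hmov hval hwhl h hh rt hht 0 τ n (by omega) (by omega)
    le_rfl
    (fun d hd => by
      show (C τ).b d + (C τ).w d ≠ 0
      rw [hcrit d hd]; norm_num)
    (fun u _ => by rw [h0]; rfl)
    (fun u _ => by rw [hn]; rfl)
  obtain ⟨ρ, hρ1, hρ2, hρ3⟩ := hclaim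
  have hle := pebCount_le_weight (hval ρ hρ2) (hwhl ρ hρ2) (subo rt)
  have hwtρ := hwt ρ hρ2
  calc (((h+1)/2 + 1 : ℕ) : ℝ) ≤ (pebCount (C ρ) (subo rt) : ℝ) := by exact_mod_cast hρ3
    _ ≤ (C ρ).weight := hle
    _ ≤ p := hwtρ

end BWProof


/-- For the complete binary tree of height `h ≥ 2`, the minimum number of pebbles in a
whole black-white pebbling (without white sliding moves) is exactly `⌈h/2⌉ + 1`
(note `⌈h/2⌉ = (h+1)/2` in natural-number arithmetic). -/
theorem bwPebbles_binary_eq (h : ℕ) (hh : 2 ≤ h) :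
    BWPebbles 2 h (by omega) (((h + 1) / 2 + 1 : ℕ) : ℝ) ∧
    ∀ p : ℝ, BWPebbles 2 h (by omega) p → (((h + 1) / 2 + 1 : ℕ) : ℝ) ≤ p := by
  exact ⟨BWProof.upper_bound hh, fun p hp => BWProof.lower_bound hh p hp⟩
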